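/- A coalgebra C over a field K is right quasi-co-Frobenius (right QcF) if and only if C is a right torsionless module, i.e. there exists a monomorphism of right C*-modules from C into a direct product (C*)^I of copies of C* for some index set I. -/

import Mathlib

open TensorProduct LinearMap MulOpposite Coalgebra

noncomputable section

/-- The dual algebra `C* = Hom_K(C, K)` of a coalgebra `C`, with the convolution product. -/
def DualAlg (K C : Type) [Field K] [AddCommGroup C] [Module K C] : Type := C →ₗ[K] K

namespace DualAlg

variable (K C : Type) [Field K] [AddCommGroup C] [Module K C]

instance : AddCommGroup (DualAlg K C) := inferInstanceAs (AddCommGroup (C →ₗ[K] K))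
instance : Module K (DualAlg K C) := inferInstanceAs (Module K (C →ₗ[K] K))

variable {K C}

/-- View an element of the dual algebra as a linear map. -/
def toLin (f : DualAlg K C) : C →ₗ[K] K := f

/-- View a linear map as an element of the dual algebra. -/
def ofLin (f : C →ₗ[K] K) : DualAlg K C := f

instance : FunLike (DualAlg K C) C K where
  coe f := f.toLin
  coe_injective := fun _ _ h => DFunLike.coe_injective (F := C →ₗ[K] K) h

@[ext] lemma ext {f g : DualAlg K C} (h : ∀ c, f c = g c) : f = g := DFunLike.ext _ _ h

@[simp] lemma toLin_apply (f : DualAlg K C) (c : C) : f.toLin c = f c := rfl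
@[simp] lemma ofLin_apply (f : C →ₗ[K] K) (c : C) : (ofLin f : DualAlg K C) c = f c := rfl
@[simp] lemma add_apply (f g : DualAlg K C) (c : C) : (f + g) c = f c + g c := rfl
@[simp] lemma zero_apply (c : C) : (0 : DualAlg K C) c = 0 := rfl
@[simp] lemma smul_apply (k : K) (f : DualAlg K C) (c : C) : (k • f) c = k * f c := rfl

variable [Coalgebra K C]

/-- The convolution product on the dual of a coalgebra. -/
def conv (f g : DualAlg K C) : DualAlg K C :=
  ofLin (LinearMap.mul' K K ∘ₗ TensorProduct.map f.toLin g.toLin ∘ₗ Coalgebra.comul)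

lemma conv_repr (f g : DualAlg K C) (c : C) {ι : Type*} (r : Coalgebra.Repr K c ι) :
    conv f g c = ∑ i ∈ r.index, f (r.left i) * g (r.right i) := by
  show LinearMap.mul' K K (TensorProduct.map f.toLin g.toLin (Coalgebra.comul c)) = _
  rw [← r.eq]
  simp [map_sum]

instance : Ring (DualAlg K C) :=
  { (inferInstance : AddCommGroup (DualAlg K C)) with
    mul := conv
    one := ofLin Coalgebra.counit
    mul_assoc := by
      intro f g h
      ext c
      show conv (conv f g) h c = conv f (conv g h) c
      classical
      set r := Coalgebra.Repr.arbitrary K c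
      set a₁ : (i : C × C) → Coalgebra.Repr K (r.left i) (C × C) := fun i => Coalgebra.Repr.arbitrary K _
      set a₂ : (i : C × C) → Coalgebra.Repr K (r.right i) (C × C) := fun i => Coalgebra.Repr.arbitrary K _
      have key := Coalgebra.sum_map_tmul_tmul_eq (f.toLin) (g.toLin) (h.toLin) c
        (repr := r) (a₁ := a₁) (a₂ := a₂)
      have := congrArg (fun z => (LinearMap.mul' K K ∘ₗ (LinearMap.mul' K K).lTensor K) z) key
      simp only [map_sum, LinearMap.coe_comp, Function.comp_apply, LinearMap.lTensor_tmul,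
        LinearMap.mul'_apply] at this
      rw [conv_repr _ _ _ r, conv_repr _ _ _ r]
      calc ∑ i ∈ r.index, conv f g (r.left i) * h (r.right i)
          = ∑ i ∈ r.index, ∑ j ∈ (a₁ i).index,
              f ((a₁ i).left j) * (g ((a₁ i).right j) * h (r.right i)) := by
            refine Finset.sum_congr rfl fun i _ => ?_
            rw [conv_repr _ _ _ (a₁ i), Finset.sum_mul]
            exact Finset.sum_congr rfl fun j _ => mul_assoc _ _ _
        _ = ∑ i ∈ r.index, ∑ j ∈ (a₂ i).index,
              f (r.left i) * (g ((a₂ i).left j) * h ((a₂ i).right j)) := this.symm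
        _ = ∑ i ∈ r.index, f (r.left i) * conv g h (r.right i) := by
            refine Finset.sum_congr rfl fun i _ => ?_
            rw [conv_repr _ _ _ (a₂ i), Finset.mul_sum]
    one_mul := by
      intro f
      ext c
      show conv (ofLin Coalgebra.counit) f c = f c
      classical
      set r := Coalgebra.Repr.arbitrary K c
      have key := Coalgebra.sum_counit_tmul_map_eq (f.toLin) c (repr := r)
      have := congrArg (fun z => LinearMap.mul' K K z) key
      simp only [map_sum, LinearMap.mul'_apply, one_mul] at this
      rw [conv_repr _ _ _ r]
      simpa using this
    mul_one := by
      intro f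
      ext c
      show conv f (ofLin Coalgebra.counit) c = f c
      classical
      set r := Coalgebra.Repr.arbitrary K c
      have key := Coalgebra.sum_map_tmul_counit_eq (f.toLin) c (repr := r)
      have := congrArg (fun z => LinearMap.mul' K K z) key
      simp only [map_sum, LinearMap.mul'_apply, mul_one] at this
      rw [conv_repr _ _ _ r]
      simpa using this
    left_distrib := by
      intro f g h
      ext c
      show conv f (g + h) c = conv f g c + conv f h c
      classical
      set r := Coalgebra.Repr.arbitrary K c
      rw [conv_repr _ _ _ r, conv_repr _ _ _ r, conv_repr _ _ _ r, ← Finset.sum_add_distrib]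
      exact Finset.sum_congr rfl fun i _ => by rw [add_apply, mul_add]
    right_distrib := by
      intro f g h
      ext c
      show conv (f + g) h c = conv f h c + conv g h c
      classical
      set r := Coalgebra.Repr.arbitrary K c
      rw [conv_repr _ _ _ r, conv_repr _ _ _ r, conv_repr _ _ _ r, ← Finset.sum_add_distrib]
      exact Finset.sum_congr rfl fun i _ => by rw [add_apply, add_mul]
    zero_mul := by
      intro f
      ext c
      show conv 0 f c = 0
      classical
      rw [conv_repr _ _ _ (Coalgebra.Repr.arbitrary K c)]
      simp
    mul_zero := by
      intro f
      ext c
      show conv f 0 c = 0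
      classical
      rw [conv_repr _ _ _ (Coalgebra.Repr.arbitrary K c)]
      simp }

lemma mul_repr (f g : DualAlg K C) (c : C) {ι : Type*} (r : Coalgebra.Repr K c ι) :
    (f * g) c = ∑ i ∈ r.index, f (r.left i) * g (r.right i) := conv_repr f g c r

@[simp] lemma one_apply (c : C) : (1 : DualAlg K C) c = Coalgebra.counit c := rfl

instance : Algebra K (DualAlg K C) :=
  Algebra.ofModule
    (fun k f g => by
      ext c
      classical
      rw [show (k • f) * g = conv (k • f) g from rfl, conv_repr _ _ _ (Coalgebra.Repr.arbitrary K c)]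
      rw [show k • (f * g) = k • conv f g from rfl]
      rw [smul_apply, conv_repr _ _ _ (Coalgebra.Repr.arbitrary K c), Finset.mul_sum]
      exact Finset.sum_congr rfl fun i _ => by rw [smul_apply]; ring)
    (fun k f g => by
      ext c
      classical
      rw [show f * (k • g) = conv f (k • g) from rfl, conv_repr _ _ _ (Coalgebra.Repr.arbitrary K c)]
      rw [show k • (f * g) = k • conv f g from rfl]
      rw [smul_apply, conv_repr _ _ _ (Coalgebra.Repr.arbitrary K c), Finset.mul_sum]
      exact Finset.sum_congr rfl fun i _ => by rw [smul_apply]; ring)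

end DualAlg

section Actions

variable (K C : Type) [Field K] [AddCommGroup C] [Module K C] [Coalgebra K C]

/-- The right action of the dual algebra on `C`: `c · f = f(c₁) c₂`, coming from the
left comodule structure of `C` over itself. -/
def ract (f : DualAlg K C) : C →ₗ[K] C :=
  (TensorProduct.lid K C).toLinearMap ∘ₗ (f.toLin.rTensor C) ∘ₗ Coalgebra.comul

/-- The left action of the dual algebra on `C`: `f · c = f(c₂) c₁`, coming from the
right comodule structure of `C` over itself. -/
def lact (f : DualAlg K C) : C →ₗ[K] C :=
  (TensorProduct.rid K C).toLinearMap ∘ₗ (f.toLin.lTensor C) ∘ₗ Coalgebra.comul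

variable {K C}

lemma ract_repr (f : DualAlg K C) (c : C) {ι : Type*} (r : Coalgebra.Repr K c ι) :
    ract K C f c = ∑ i ∈ r.index, f (r.left i) • r.right i := by
  show (TensorProduct.lid K C) (f.toLin.rTensor C (Coalgebra.comul c)) = _
  rw [← r.eq]
  simp [map_sum]

lemma lact_repr (f : DualAlg K C) (c : C) {ι : Type*} (r : Coalgebra.Repr K c ι) :
    lact K C f c = ∑ i ∈ r.index, f (r.right i) • r.left i := by
  show (TensorProduct.rid K C) (f.toLin.lTensor C (Coalgebra.comul c)) = _
  rw [← r.eq]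
  simp [map_sum]

variable (K C)

/-- `C` is a right module over its dual algebra (equivalently, a left comodule over itself). -/
instance : Module (DualAlg K C)ᵐᵒᵖ C where
  smul a c := ract K C a.unop c
  one_smul c := by
    show ract K C 1 c = c
    classical
    set r := Coalgebra.Repr.arbitrary K c
    have key := Coalgebra.sum_counit_tmul_eq r
    have := congrArg (fun z => (TensorProduct.lid K C) z) key
    simp only [map_sum, TensorProduct.lid_tmul] at this
    rw [ract_repr _ _ r]
    simpa using this
  mul_smul a b c := by
    show ract K C (b.unop * a.unop) c = ract K C a.unop (ract K C b.unop c)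
    classical
    set g := b.unop
    set f := a.unop
    set r := Coalgebra.Repr.arbitrary K c
    set a₁ : (i : C × C) → Coalgebra.Repr K (r.left i) (C × C) := fun i => Coalgebra.Repr.arbitrary K _
    set a₂ : (i : C × C) → Coalgebra.Repr K (r.right i) (C × C) := fun i => Coalgebra.Repr.arbitrary K _
    have key := Coalgebra.sum_tmul_tmul_eq r a₁ a₂
    have hmap := congrArg (fun z =>
      (TensorProduct.lid K C)
        ((LinearMap.rTensor C (LinearMap.mul' K K ∘ₗ TensorProduct.map g.toLin f.toLin))
          ((TensorProduct.assoc K C C C).symm z))) key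
    simp only [map_sum, TensorProduct.assoc_symm_tmul, LinearMap.rTensor_tmul,
      LinearMap.coe_comp, Function.comp_apply, TensorProduct.map_tmul,
      LinearMap.mul'_apply, TensorProduct.lid_tmul] at hmap
    rw [ract_repr _ _ r]
    calc ∑ i ∈ r.index, (g * f) (r.left i) • r.right i
        = ∑ i ∈ r.index, ∑ j ∈ (a₁ i).index,
            (g ((a₁ i).left j) * f ((a₁ i).right j)) • r.right i := by
          refine Finset.sum_congr rfl fun i _ => ?_
          rw [DualAlg.mul_repr _ _ _ (a₁ i), Finset.sum_smul]
      _ = ∑ i ∈ r.index, ∑ j ∈ (a₂ i).index,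
            (g (r.left i) * f ((a₂ i).left j)) • (a₂ i).right j := hmap
      _ = ract K C f (ract K C g c) := by
          rw [ract_repr g _ r, map_sum]
          refine Finset.sum_congr rfl fun i _ => ?_
          rw [map_smul, ract_repr f _ (a₂ i), Finset.smul_sum]
          exact Finset.sum_congr rfl fun j _ => by rw [smul_smul]
  smul_zero a := map_zero (ract K C a.unop)
  smul_add a x y := map_add (ract K C a.unop) x y
  add_smul a b c := by
    show ract K C (a.unop + b.unop) c = ract K C a.unop c + ract K C b.unop c
    classical
    set r := Coalgebra.Repr.arbitrary K c
    rw [ract_repr _ _ r, ract_repr _ _ r, ract_repr _ _ r, ← Finset.sum_add_distrib]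
    exact Finset.sum_congr rfl fun i _ => by rw [DualAlg.add_apply, add_smul]
  zero_smul c := by
    show ract K C 0 c = 0
    classical
    rw [ract_repr _ _ (Coalgebra.Repr.arbitrary K c)]
    simp

/-- `C` is a left module over its dual algebra (equivalently, a right comodule over itself). -/
instance : Module (DualAlg K C) C where
  smul f c := lact K C f c
  one_smul c := by
    show lact K C 1 c = c
    classical
    set r := Coalgebra.Repr.arbitrary K c
    have key := Coalgebra.sum_tmul_counit_eq r
    have := congrArg (fun z => (TensorProduct.rid K C) z) key
    simp only [map_sum, TensorProduct.rid_tmul] at this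
    rw [lact_repr _ _ r]
    simpa using this
  mul_smul f g c := by
    show lact K C (f * g) c = lact K C f (lact K C g c)
    classical
    set r := Coalgebra.Repr.arbitrary K c
    set a₁ : (i : C × C) → Coalgebra.Repr K (r.left i) (C × C) := fun i => Coalgebra.Repr.arbitrary K _
    set a₂ : (i : C × C) → Coalgebra.Repr K (r.right i) (C × C) := fun i => Coalgebra.Repr.arbitrary K _
    have key := Coalgebra.sum_tmul_tmul_eq r a₁ a₂
    have hmap := congrArg (fun z =>
      (TensorProduct.rid K C)
        ((LinearMap.lTensor C (LinearMap.mul' K K ∘ₗ TensorProduct.map f.toLin g.toLin)) z)) key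
    simp only [map_sum, LinearMap.lTensor_tmul, LinearMap.coe_comp, Function.comp_apply,
      TensorProduct.map_tmul, LinearMap.mul'_apply, TensorProduct.rid_tmul] at hmap
    rw [lact_repr _ _ r]
    calc ∑ i ∈ r.index, (f * g) (r.right i) • r.left i
        = ∑ i ∈ r.index, ∑ j ∈ (a₂ i).index,
            (f ((a₂ i).left j) * g ((a₂ i).right j)) • r.left i := by
          refine Finset.sum_congr rfl fun i _ => ?_
          rw [DualAlg.mul_repr _ _ _ (a₂ i), Finset.sum_smul]
      _ = ∑ i ∈ r.index, ∑ j ∈ (a₁ i).index,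
            (f ((a₁ i).right j) * g (r.right i)) • (a₁ i).left j := hmap.symm
      _ = lact K C f (lact K C g c) := by
          rw [lact_repr g _ r, map_sum]
          refine Finset.sum_congr rfl fun i _ => ?_
          rw [map_smul, lact_repr f _ (a₁ i), Finset.smul_sum]
          refine Finset.sum_congr rfl fun j _ => ?_
          rw [smul_smul, mul_comm]
  smul_zero f := map_zero (lact K C f)
  smul_add f x y := map_add (lact K C f) x y
  add_smul f g c := by
    show lact K C (f + g) c = lact K C f c + lact K C g c
    classical
    set r := Coalgebra.Repr.arbitrary K c
    rw [lact_repr _ _ r, lact_repr _ _ r, lact_repr _ _ r, ← Finset.sum_add_distrib]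
    exact Finset.sum_congr rfl fun i _ => by rw [DualAlg.add_apply, add_smul]
  zero_smul c := by
    show lact K C 0 c = 0
    classical
    rw [lact_repr _ _ (Coalgebra.Repr.arbitrary K c)]
    simp

lemma op_smul_def (f : DualAlg K C) (c : C) : (MulOpposite.op f) • c = ract K C f c := rfl
lemma smul_def' (f : DualAlg K C) (c : C) : f • c = lact K C f c := rfl

instance : IsScalarTower K (DualAlg K C)ᵐᵒᵖ (DualAlg K C) :=
  ⟨fun k a b => by
    show b * (k • a).unop = k • (b * a.unop)
    rw [MulOpposite.unop_smul, mul_smul_comm]⟩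

instance : IsScalarTower K (DualAlg K C)ᵐᵒᵖ C :=
  ⟨fun k a c => by
    show ract K C (k • a.unop) c = k • ract K C a.unop c
    classical
    set r := Coalgebra.Repr.arbitrary K c
    rw [ract_repr _ _ r, ract_repr _ _ r, Finset.smul_sum]
    exact Finset.sum_congr rfl fun i _ => by rw [DualAlg.smul_apply, mul_smul]⟩

instance : IsScalarTower K (DualAlg K C) C :=
  ⟨fun k f c => by
    show lact K C (k • f) c = k • lact K C f c
    classical
    set r := Coalgebra.Repr.arbitrary K c
    rw [lact_repr _ _ r, lact_repr _ _ r, Finset.smul_sum]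
    exact Finset.sum_congr rfl fun i _ => by rw [DualAlg.smul_apply, mul_smul]⟩

instance : SMulCommClass K (DualAlg K C)ᵐᵒᵖ C :=
  ⟨fun k a c => by
    show k • ract K C a.unop c = ract K C a.unop (k • c)
    rw [map_smul]⟩

instance : SMulCommClass K (DualAlg K C) C :=
  ⟨fun k f c => by
    show k • lact K C f c = lact K C f (k • c)
    rw [map_smul]⟩

instance : SMulCommClass (DualAlg K C)ᵐᵒᵖ (DualAlg K C) (DualAlg K C) :=
  ⟨fun a b c => by
    show (b * c) * a.unop = b * (c * a.unop)
    rw [mul_assoc]⟩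

end Actions

section QcF

variable (K C : Type) [Field K] [AddCommGroup C] [Module K C] [Coalgebra K C]

/-- A coalgebra is right quasi-co-Frobenius if there is a monomorphism of right `C*`-modules
from `C` into a direct sum of copies of `C*`. -/
def RightQcF : Prop :=
  ∃ (I : Type) (f : C →ₗ[(DualAlg K C)ᵐᵒᵖ] (I →₀ DualAlg K C)), Function.Injective f

/-- A coalgebra is left quasi-co-Frobenius if there is a monomorphism of left `C*`-modules
from `C` into a direct sum of copies of `C*`. -/
def LeftQcF : Prop :=
  ∃ (I : Type) (f : C →ₗ[DualAlg K C] (I →₀ DualAlg K C)), Function.Injective f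

/-- A coalgebra is quasi-co-Frobenius if it is both left and right quasi-co-Frobenius. -/
def IsQcF : Prop := LeftQcF K C ∧ RightQcF K C

/-- A coalgebra is right co-Frobenius if there is a monomorphism of right `C*`-modules
from `C` into `C*`. -/
def RightCoFrobenius : Prop :=
  ∃ f : C →ₗ[(DualAlg K C)ᵐᵒᵖ] DualAlg K C, Function.Injective f

/-- A coalgebra is left co-Frobenius if there is a monomorphism of left `C*`-modules
from `C` into `C*`. -/
def LeftCoFrobenius : Prop :=
  ∃ f : C →ₗ[DualAlg K C] DualAlg K C, Function.Injective f

/-- A coalgebra is co-Frobenius if it is both left and right co-Frobenius. -/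
def IsCoFrobenius : Prop := LeftCoFrobenius K C ∧ RightCoFrobenius K C

/-- The finite topology on the dual of a coalgebra: the topology induced from the product
topology on `C → K`, where `K` carries the discrete topology.  A basis of neighbourhoods of `0`
is given by the annihilators `F^⊥` of finite-dimensional subspaces `F ⊆ C`. -/
def finiteTopology : TopologicalSpace (DualAlg K C) :=
  TopologicalSpace.induced (fun f => (f : C → K))
    (@Pi.topologicalSpace C (fun _ => K) (fun _ => ⊥))

end QcF

section Rational

variable (K C : Type) [Field K] [AddCommGroup C] [Module K C] [Coalgebra K C]
variable (M : Type) [AddCommGroup M] [Module K M]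

/-- The contraction `M ⊗ C → M` along a functional `f ∈ C*`: `m ⊗ c ↦ f(c) m`. -/
def cntr (f : DualAlg K C) : M ⊗[K] C →ₗ[K] M :=
  (TensorProduct.rid K M).toLinearMap ∘ₗ (f.toLin.lTensor M)

@[simp] lemma cntr_tmul (f : DualAlg K C) (m : M) (c : C) :
    cntr K C M f (m ⊗ₜ[K] c) = f c • m := by
  simp [cntr]

/-- An element `m` of a right `C*`-module is rational if the action of `C*` on it comes from
a "coaction" `ρ(m) = ∑ xᵢ ⊗ cᵢ ∈ M ⊗ C`, i.e. `m · f = ∑ f(cᵢ) xᵢ` for all `f ∈ C*`. -/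
def IsRatRight [Module (DualAlg K C)ᵐᵒᵖ M] (m : M) : Prop :=
  ∃ z : M ⊗[K] C, ∀ f : DualAlg K C, (MulOpposite.op f) • m = cntr K C M f z

/-- An element `m` of a left `C*`-module is rational if the action of `C*` on it comes from
a "coaction" `ρ(m) = ∑ xᵢ ⊗ cᵢ ∈ M ⊗ C`, i.e. `f · m = ∑ f(cᵢ) xᵢ` for all `f ∈ C*`. -/
def IsRatLeft [Module (DualAlg K C) M] (m : M) : Prop :=
  ∃ z : M ⊗[K] C, ∀ f : DualAlg K C, f • m = cntr K C M f z

lemma cntr_mul_ract (g f : DualAlg K C) :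
    cntr K C M (g * f) = (cntr K C M f) ∘ₗ (TensorProduct.map LinearMap.id (ract K C g)) := by
  apply TensorProduct.ext'
  intro m c
  classical
  set r := Coalgebra.Repr.arbitrary K c
  simp only [LinearMap.coe_comp, Function.comp_apply, TensorProduct.map_tmul,
    LinearMap.id_coe, id_eq, cntr_tmul]
  congr 1
  rw [DualAlg.mul_repr _ _ _ r, ract_repr _ _ r]
  show _ = f.toLin _
  rw [map_sum]
  exact Finset.sum_congr rfl fun i _ => by
    rw [map_smul, smul_eq_mul, DualAlg.toLin_apply]

lemma cntr_mul_lact (f g : DualAlg K C) :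
    cntr K C M (f * g) = (cntr K C M f) ∘ₗ (TensorProduct.map LinearMap.id (lact K C g)) := by
  apply TensorProduct.ext'
  intro m c
  classical
  set r := Coalgebra.Repr.arbitrary K c
  simp only [LinearMap.coe_comp, Function.comp_apply, TensorProduct.map_tmul,
    LinearMap.id_coe, id_eq, cntr_tmul]
  congr 1
  rw [DualAlg.mul_repr _ _ _ r, lact_repr _ _ r]
  show _ = f.toLin _
  rw [map_sum]
  refine Finset.sum_congr rfl fun i _ => ?_
  rw [map_smul, smul_eq_mul, DualAlg.toLin_apply, mul_comm]

/-- `Rat(M)`, the largest rational submodule of a right `C*`-module `M`. -/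
def RatR [Module (DualAlg K C)ᵐᵒᵖ M] : Submodule (DualAlg K C)ᵐᵒᵖ M where
  carrier := {m | IsRatRight K C M m}
  zero_mem' := ⟨0, fun f => by simp⟩
  add_mem' := by
    rintro x y ⟨z, hz⟩ ⟨w, hw⟩
    exact ⟨z + w, fun f => by rw [smul_add, hz f, hw f, map_add]⟩
  smul_mem' := by
    rintro a m ⟨z, hz⟩
    refine ⟨(TensorProduct.map LinearMap.id (ract K C a.unop)) z, fun f => ?_⟩
    have h1 : (MulOpposite.op f) • a • m = (MulOpposite.op (a.unop * f)) • m := by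
      rw [MulOpposite.op_mul, mul_smul, MulOpposite.op_unop]
    rw [h1, hz (a.unop * f), cntr_mul_ract]
    rfl

/-- `Rat(M)`, the largest rational submodule of a left `C*`-module `M`. -/
def RatL [Module (DualAlg K C) M] : Submodule (DualAlg K C) M where
  carrier := {m | IsRatLeft K C M m}
  zero_mem' := ⟨0, fun f => by simp⟩
  add_mem' := by
    rintro x y ⟨z, hz⟩ ⟨w, hw⟩
    exact ⟨z + w, fun f => by rw [smul_add, hz f, hw f, map_add]⟩
  smul_mem' := by
    rintro g m ⟨z, hz⟩
    refine ⟨(TensorProduct.map LinearMap.id (lact K C g)) z, fun f => ?_⟩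
    rw [← mul_smul, hz (f * g), cntr_mul_lact]
    rfl

end Rational

section Comodules

variable (K C : Type) [Field K] [AddCommGroup C] [Module K C] [Coalgebra K C]

/-- A left `C`-comodule, viewed as a `K`-vector space together with a compatible rational
right `C*`-module structure. -/
structure LComod where
  M : Type
  [ab : AddCommGroup M]
  [modK : Module K M]
  [modD : Module (DualAlg K C)ᵐᵒᵖ M]
  compat : ∀ (k : K) (m : M), k • m = (MulOpposite.op (algebraMap K (DualAlg K C) k)) • m
  rat : ∀ m : M, IsRatRight K C M m

attribute [instance] LComod.ab LComod.modK LComod.modD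

/-- A right `C`-comodule, viewed as a `K`-vector space together with a compatible rational
left `C*`-module structure. -/
structure RComod where
  M : Type
  [ab : AddCommGroup M]
  [modK : Module K M]
  [modD : Module (DualAlg K C) M]
  compat : ∀ (k : K) (m : M), k • m = (algebraMap K (DualAlg K C) k) • m
  rat : ∀ m : M, IsRatLeft K C M m

attribute [instance] RComod.ab RComod.modK RComod.modD

variable {K C}

/-- A left comodule is simple if it is simple as a (rational) right `C*`-module. -/
def LComod.Simple (X : LComod K C) : Prop := IsSimpleModule (DualAlg K C)ᵐᵒᵖ X.M

/-- A right comodule is simple if it is simple as a (rational) left `C*`-module. -/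
def RComod.Simple (X : RComod K C) : Prop := IsSimpleModule (DualAlg K C) X.M

/-- A left comodule is an injective object if every comodule map into it extends along
monomorphisms of left comodules. -/
def LComod.InjectiveObj (E : LComod K C) : Prop :=
  ∀ (X Y : LComod K C) (i : X.M →ₗ[(DualAlg K C)ᵐᵒᵖ] Y.M), Function.Injective i →
    ∀ f : X.M →ₗ[(DualAlg K C)ᵐᵒᵖ] E.M, ∃ g : Y.M →ₗ[(DualAlg K C)ᵐᵒᵖ] E.M, g ∘ₗ i = f

/-- A right comodule is an injective object if every comodule map into it extends along
monomorphisms of right comodules. -/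
def RComod.InjectiveObj (E : RComod K C) : Prop :=
  ∀ (X Y : RComod K C) (i : X.M →ₗ[DualAlg K C] Y.M), Function.Injective i →
    ∀ f : X.M →ₗ[DualAlg K C] E.M, ∃ g : Y.M →ₗ[DualAlg K C] E.M, g ∘ₗ i = f

/-- `E` is an injective envelope of the left comodule `S`: `E` is injective and `S` embeds
in `E` as an essential subcomodule. -/
def LComod.IsInjEnvelopeOf (E S : LComod K C) : Prop :=
  E.InjectiveObj ∧ ∃ i : S.M →ₗ[(DualAlg K C)ᵐᵒᵖ] E.M, Function.Injective i ∧
    ∀ N : Submodule (DualAlg K C)ᵐᵒᵖ E.M, N ⊓ LinearMap.range i = ⊥ → N = ⊥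

/-- `E` is an injective envelope of the right comodule `S`: `E` is injective and `S` embeds
in `E` as an essential subcomodule. -/
def RComod.IsInjEnvelopeOf (E S : RComod K C) : Prop :=
  E.InjectiveObj ∧ ∃ i : S.M →ₗ[DualAlg K C] E.M, Function.Injective i ∧
    ∀ N : Submodule (DualAlg K C) E.M, N ⊓ LinearMap.range i = ⊥ → N = ⊥

variable (K C)

/-- A coalgebra is right semiperfect if the injective envelope of every simple left comodule
is finite dimensional. -/
def RightSemiperfect : Prop :=
  ∀ S E : LComod K C, S.Simple → E.IsInjEnvelopeOf S → FiniteDimensional K E.M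

/-- A coalgebra is left semiperfect if the injective envelope of every simple right comodule
is finite dimensional. -/
def LeftSemiperfect : Prop :=
  ∀ S E : RComod K C, S.Simple → E.IsInjEnvelopeOf S → FiniteDimensional K E.M

variable {K C}

instance (X : LComod K C) : SMulCommClass K (DualAlg K C)ᵐᵒᵖ X.M :=
  ⟨fun k a m => by
    rw [X.compat k m, X.compat k (a • m), ← mul_smul, ← mul_smul, ← MulOpposite.op_unop a,
      ← MulOpposite.op_mul, ← MulOpposite.op_mul, Algebra.commutes k (MulOpposite.unop a)]⟩

instance (X : RComod K C) : SMulCommClass K (DualAlg K C) X.M :=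
  ⟨fun k a m => by
    rw [X.compat k m, X.compat k (a • m), ← mul_smul, ← mul_smul, Algebra.commutes k a]⟩

end Comodules

section DualModules

variable {K C : Type} [Field K] [AddCommGroup C] [Module K C] [Coalgebra K C]
variable (M : Type) [AddCommGroup M] [Module K M]

/-- The action of an element of (the opposite of) the dual algebra as a `K`-linear map. -/
def opSmulLin [Module (DualAlg K C)ᵐᵒᵖ M] [SMulCommClass K (DualAlg K C)ᵐᵒᵖ M]
    (a : (DualAlg K C)ᵐᵒᵖ) : M →ₗ[K] M where
  toFun m := a • m
  map_add' := smul_add a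
  map_smul' k m := (smul_comm k a m).symm

/-- The action of an element of the dual algebra as a `K`-linear map. -/
def smulLin [Module (DualAlg K C) M] [SMulCommClass K (DualAlg K C) M]
    (a : DualAlg K C) : M →ₗ[K] M where
  toFun m := a • m
  map_add' := smul_add a
  map_smul' k m := (smul_comm k a m).symm

/-- The `K`-linear dual of a right `C*`-module is a left `C*`-module via `(g·φ)(m) = φ(m·g)`. -/
instance dualModuleLeft [Module (DualAlg K C)ᵐᵒᵖ M] [SMulCommClass K (DualAlg K C)ᵐᵒᵖ M] :
    Module (DualAlg K C) (Module.Dual K M) where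
  smul g φ := φ ∘ₗ opSmulLin M (MulOpposite.op g)
  one_smul φ := by ext m; show φ ((MulOpposite.op (1 : DualAlg K C)) • m) = φ m; simp
  mul_smul g h φ := by
    ext m
    show φ ((MulOpposite.op (g * h)) • m) = φ ((MulOpposite.op h) • (MulOpposite.op g) • m)
    rw [← mul_smul, MulOpposite.op_mul]
  smul_zero g := by ext m; rfl
  smul_add g φ ψ := by ext m; rfl
  add_smul g h φ := by
    ext m
    show φ ((MulOpposite.op (g + h)) • m) = φ (MulOpposite.op g • m) + φ (MulOpposite.op h • m)
    rw [show MulOpposite.op (g + h) = MulOpposite.op g + MulOpposite.op h from rfl, add_smul,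
      map_add]
  zero_smul φ := by
    ext m
    show φ ((MulOpposite.op (0 : DualAlg K C)) • m) = 0
    rw [show MulOpposite.op (0 : DualAlg K C) = 0 from rfl, zero_smul, map_zero]

/-- The `K`-linear dual of a left `C*`-module is a right `C*`-module via `(φ·f)(m) = φ(f·m)`. -/
instance dualModuleRight [Module (DualAlg K C) M] [SMulCommClass K (DualAlg K C) M] :
    Module (DualAlg K C)ᵐᵒᵖ (Module.Dual K M) where
  smul a φ := φ ∘ₗ smulLin M a.unop
  one_smul φ := by ext m; show φ ((1 : DualAlg K C) • m) = φ m; simp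
  mul_smul a b φ := by
    ext m
    show φ ((b.unop * a.unop) • m) = φ (b.unop • a.unop • m)
    rw [← mul_smul]
  smul_zero g := by ext m; rfl
  smul_add g φ ψ := by ext m; rfl
  add_smul a b φ := by
    ext m
    show φ ((a.unop + b.unop) • m) = φ (a.unop • m) + φ (b.unop • m)
    rw [add_smul, map_add]
  zero_smul φ := by
    ext m
    show φ ((0 : DualAlg K C) • m) = 0
    rw [zero_smul, map_zero]

end DualModules

section Hopf

variable (K H : Type) [Field K] [Ring H] [HopfAlgebra K H]

/-- The space of left integrals of a Hopf algebra: those `t ∈ H*` with `α * t = α(1) t`. -/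
def leftIntegrals : Submodule K (DualAlg K H) where
  carrier := {t | ∀ a : DualAlg K H, a * t = a (1 : H) • t}
  zero_mem' := by intro a; simp
  add_mem' := by intro x y hx hy a; rw [mul_add, hx a, hy a, smul_add]
  smul_mem' := by intro k x hx a; rw [mul_smul_comm, hx a, smul_comm]

/-- The space of right integrals of a Hopf algebra: those `t ∈ H*` with `t * α = α(1) t`. -/
def rightIntegrals : Submodule K (DualAlg K H) where
  carrier := {t | ∀ a : DualAlg K H, t * a = a (1 : H) • t}
  zero_mem' := by intro a; simp
  add_mem' := by intro x y hx hy a; rw [add_mul, hx a, hy a, smul_add]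
  smul_mem' := by intro k x hx a; rw [smul_mul_assoc, hx a, smul_comm]

/-- `x ↦ x ⇀ t`, i.e. `(x ⇀ t)(y) = t(yx)`, as a linear map `H → H*`. -/
def intMap (t : DualAlg K H) : H →ₗ[K] DualAlg K H where
  toFun x := DualAlg.ofLin (t.toLin ∘ₗ LinearMap.mulRight K x)
  map_add' x y := by
    apply DualAlg.ext; intro z
    show t.toLin (z * (x + y)) = t.toLin (z * x) + t.toLin (z * y)
    rw [mul_add, map_add]
  map_smul' k x := by
    apply DualAlg.ext; intro z
    show t.toLin (z * (k • x)) = k * t.toLin (z * x)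
    rw [mul_smul_comm, map_smul, smul_eq_mul]

/-- The twisted left coaction `x ↦ a S(x₂) ⊗ x₁` on `H`, for `a ∈ H`. -/
def aCoaction (a : H) : H →ₗ[K] H ⊗[K] H :=
  (TensorProduct.map ((LinearMap.mulLeft K a) ∘ₗ (HopfAlgebra.antipode (R := K))) LinearMap.id)
    ∘ₗ (TensorProduct.comm K H H).toLinearMap ∘ₗ Coalgebra.comul

/-- The right `H*`-action on `ᵃH` associated to the twisted coaction `x ↦ a S(x₂) ⊗ x₁`:
`x · f = f(a S(x₂)) x₁`. -/
def aAction (a : H) (f : DualAlg K H) : H →ₗ[K] H :=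
  (TensorProduct.lid K H).toLinearMap ∘ₗ (f.toLin.rTensor H) ∘ₗ aCoaction K H a

end Hopf

set_option maxHeartbeats 1000000
set_option synthInstance.maxHeartbeats 400000

namespace QcFTL

variable {K C : Type} [Field K] [AddCommGroup C] [Module K C] [Coalgebra K C]

local notation "𝓡" => (DualAlg K C)ᵐᵒᵖ

open scoped Classical DirectSum

set_option maxHeartbeats 1000000
set_option synthInstance.maxHeartbeats 400000

abbrev bIdx (K C : Type) [Field K] [AddCommGroup C] [Module K C] : Type :=
  Module.Basis.ofVectorSpaceIndex K C

/-- fixed basis of C -/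
noncomputable def bC (K C : Type) [Field K] [AddCommGroup C] [Module K C] :
    Module.Basis (bIdx K C) K C := Module.Basis.ofVectorSpace K C

/-- The iso `C ⊗ C ≃ (ι →₀ C)` expanding the left factor along the fixed basis. -/
noncomputable def Φ (K C : Type) [Field K] [AddCommGroup C] [Module K C] :
    C ⊗[K] C ≃ₗ[K] (bIdx K C →₀ C) :=
  (TensorProduct.congr (bC K C).repr (LinearEquiv.refl K C)).trans
    (TensorProduct.finsuppScalarLeft K C _)

lemma Φ_symm_single (i : bIdx K C) (n : C) :
    (Φ K C).symm (Finsupp.single i n) = (bC K C) i ⊗ₜ[K] n := by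
  simp only [Φ, LinearEquiv.trans_symm, LinearEquiv.trans_apply,
    TensorProduct.finsuppScalarLeft_symm_apply_single]
  rw [TensorProduct.congr_symm_tmul]
  simp [bC]

/-- right components of `comul c` along the fixed basis -/
noncomputable def rc (c : C) : bIdx K C →₀ C := Φ K C (Coalgebra.comul c)

lemma rc_eq (c : C) :
    ∑ i ∈ (rc c).support, (bC K C) i ⊗ₜ[K] (rc c) i = (Coalgebra.comul c : C ⊗[K] C) := by
  have h : (Coalgebra.comul c : C ⊗[K] C) = (Φ K C).symm (rc c) :=
    (LinearEquiv.symm_apply_apply _ _).symm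
  rw [h]
  calc ∑ i ∈ (rc c).support, (bC K C) i ⊗ₜ[K] (rc c) i
      = ∑ i ∈ (rc c).support, (Φ K C).symm (Finsupp.single i ((rc c) i)) := by
        refine Finset.sum_congr rfl fun i _ => ?_
        rw [Φ_symm_single]
    _ = (Φ K C).symm (∑ i ∈ (rc c).support, Finsupp.single i ((rc c) i)) := by
        rw [map_sum]
    _ = (Φ K C).symm (rc c) := by
        congr 1
        conv_rhs => rw [← Finsupp.sum_single (rc c)]
        rfl

/-- A representation of `comul c` with basis elements on the left. -/
noncomputable def niceRepr (c : C) : Coalgebra.Repr K c (bIdx K C) where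
  index := (rc c).support
  left := fun i => (bC K C) i
  right := fun i => rc c i
  eq := rc_eq c

lemma rc_apply (c : C) (i : bIdx K C) :
    rc c i = ract K C (DualAlg.ofLin ((bC K C).coord i)) c := by
  rw [ract_repr _ c (niceRepr c)]
  show rc c i = ∑ j ∈ (rc c).support,
    (DualAlg.ofLin ((bC K C).coord i) : DualAlg K C) ((bC K C) j) • rc c j
  have hval : ∀ j, (DualAlg.ofLin ((bC K C).coord i) : DualAlg K C) ((bC K C) j)
      = if j = i then (1 : K) else 0 := by
    intro j
    rw [DualAlg.ofLin_apply, Module.Basis.coord_apply, Module.Basis.repr_self, Finsupp.single_apply]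
  rw [Finset.sum_congr rfl fun j _ => by rw [hval j, ite_smul, one_smul, zero_smul]]
  rw [Finset.sum_ite_eq' (rc c).support i (fun j => rc c j)]
  by_cases hi : i ∈ (rc c).support
  · simp [hi]
  · simp [hi, Finsupp.notMem_support_iff.mp hi]

lemma ract_mem {N : Submodule 𝓡 C} (f : DualAlg K C) {c : C} (hc : c ∈ N) :
    ract K C f c ∈ N := by
  rw [← op_smul_def]; exact N.smul_mem _ hc

lemma rc_mem {N : Submodule 𝓡 C} {c : C} (hc : c ∈ N) (i : bIdx K C) : rc c i ∈ N := by
  rw [rc_apply]; exact ract_mem _ hc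

lemma counit_sum {c : C} {ι : Type*} (r : Coalgebra.Repr K c ι) :
    ∑ i ∈ r.index, (Coalgebra.counit (r.right i) : K) • r.left i = c := by
  have h := congrArg (TensorProduct.rid K C) (Coalgebra.sum_tmul_counit_eq r)
  rw [map_sum] at h
  simp only [TensorProduct.rid_tmul, one_smul] at h
  exact h

lemma k_smul_def (k : K) (c : C) :
    k • c = (MulOpposite.op (k • (1 : DualAlg K C))) • c := by
  rw [MulOpposite.op_smul, MulOpposite.op_one, smul_assoc, one_smul]

lemma smul_mem_K (N : Submodule 𝓡 C) (k : K) {x : C} (hx : x ∈ N) : k • x ∈ N := by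
  rw [k_smul_def]; exact N.smul_mem _ hx

lemma fd_cyclic (c : C) :
    FiniteDimensional K ((Submodule.span 𝓡 {c}).restrictScalars K) := by
  have hle : (Submodule.span 𝓡 {c}).restrictScalars K ≤
      Submodule.span K ((((rc (K := K) c)).support.image (rc (K := K) c) : Finset C) : Set C) := by
    intro x hx
    rw [Submodule.restrictScalars_mem] at hx
    obtain ⟨a, rfl⟩ := Submodule.mem_span_singleton.mp hx
    rw [← MulOpposite.op_unop a, op_smul_def, ract_repr _ c (niceRepr c)]
    refine Submodule.sum_mem _ fun i hi => Submodule.smul_mem _ _ (Submodule.subset_span ?_)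
    exact Finset.mem_coe.mpr (Finset.mem_image_of_mem _ hi)
  have : FiniteDimensional K
      (Submodule.span K ((((rc (K := K) c)).support.image (rc (K := K) c) : Finset C) : Set C)) :=
    FiniteDimensional.span_of_finite K (Finset.finite_toSet _)
  exact Submodule.finiteDimensional_of_le hle

/-- `lact` and `ract` commute (`C` is a `C*`-bimodule). -/
lemma lact_ract_comm (α f : DualAlg K C) (c : C) :
    lact K C α (ract K C f c) = ract K C f (lact K C α c) := by
  classical
  set r := Coalgebra.Repr.arbitrary K c
  set a₁ : (i : C × C) → Coalgebra.Repr K (r.left i) (C × C) := fun i => Coalgebra.Repr.arbitrary K _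
  set a₂ : (i : C × C) → Coalgebra.Repr K (r.right i) (C × C) := fun i => Coalgebra.Repr.arbitrary K _
  have key := Coalgebra.sum_tmul_tmul_eq r a₁ a₂
  have hmap := congrArg (fun z : C ⊗[K] (C ⊗[K] C) =>
    (TensorProduct.lid K C)
      ((f.toLin.rTensor C)
        ((LinearMap.lTensor C
          ((TensorProduct.rid K C).toLinearMap ∘ₗ (α.toLin.lTensor C))) z))) key
  simp only [map_sum, LinearMap.lTensor_tmul, LinearMap.coe_comp, Function.comp_apply,
    LinearEquiv.coe_coe, TensorProduct.rid_tmul, LinearMap.rTensor_tmul,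
    TensorProduct.lid_tmul, map_smul, DualAlg.toLin_apply] at hmap
  calc lact K C α (ract K C f c)
      = ∑ i ∈ r.index, ∑ j ∈ (a₂ i).index,
          f (r.left i) • α ((a₂ i).right j) • (a₂ i).left j := by
        rw [ract_repr _ c r, map_sum]
        refine Finset.sum_congr rfl fun i _ => ?_
        rw [map_smul, lact_repr _ _ (a₂ i), Finset.smul_sum]
    _ = ∑ i ∈ r.index, ∑ j ∈ (a₁ i).index,
          f ((a₁ i).left j) • α (r.right i) • (a₁ i).right j := hmap.symm
    _ = ract K C f (lact K C α c) := by
        rw [lact_repr _ c r, map_sum]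
        refine Eq.symm (Finset.sum_congr rfl fun i _ => ?_)
        rw [map_smul, ract_repr _ _ (a₁ i), Finset.smul_sum]
        exact Finset.sum_congr rfl fun j _ => smul_comm _ _ _

/-- left action by `α` as a map of right `C*`-modules -/
noncomputable def lactHom (α : DualAlg K C) : C →ₗ[𝓡] C where
  toFun := lact K C α
  map_add' := map_add _
  map_smul' a c := by
    show lact K C α (a • c) = a • lact K C α c
    rw [← MulOpposite.op_unop a, op_smul_def, op_smul_def]
    exact lact_ract_comm α a.unop c

/-- Extension principle: any map of right `C*`-modules from a submodule of `C` into `C`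
is the restriction of a left multiplication `lact α`. -/
lemma exists_lact_extends (D : Submodule 𝓡 C) (π : D →ₗ[𝓡] C) :
    ∃ α : DualAlg K C, ∀ d : D, lact K C α (d : C) = π d := by
  classical
  have hKlin : ∀ (k : K) (d : D), π (k • d) = k • π d := by
    intro k d
    have h1 : k • d = (MulOpposite.op (k • (1 : DualAlg K C))) • d :=
      Subtype.ext (k_smul_def k (d : C))
    rw [h1, π.map_smul]
    exact (k_smul_def k (π d)).symm
  obtain ⟨Q, hQ⟩ := Submodule.exists_isCompl (D.restrictScalars K)
  let pr : C →ₗ[K] (D.restrictScalars K) :=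
    Submodule.linearProjOfIsCompl (D.restrictScalars K) Q hQ
  let πK : (D.restrictScalars K) →ₗ[K] C :=
    { toFun := fun x => π ⟨x.1, x.2⟩
      map_add' := fun x y => by
        show π ⟨x.1 + y.1, _⟩ = π ⟨x.1, x.2⟩ + π ⟨y.1, y.2⟩
        rw [show (⟨x.1 + y.1, add_mem x.2 y.2⟩ : D) = ⟨x.1, x.2⟩ + ⟨y.1, y.2⟩ from rfl,
          map_add]
      map_smul' := fun k x => by
        show π ⟨k • x.1, _⟩ = k • π ⟨x.1, x.2⟩
        rw [show (⟨k • x.1, smul_mem_K D k x.2⟩ : D) = k • ⟨x.1, x.2⟩ from rfl]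
        exact hKlin k _ }
  set α : DualAlg K C := DualAlg.ofLin (Coalgebra.counit ∘ₗ πK ∘ₗ pr) with hαdef
  have hα : ∀ d' : D, α (d' : C) = Coalgebra.counit (π d') := by
    intro d'
    show Coalgebra.counit (πK (pr (d' : C))) = Coalgebra.counit (π d')
    have : pr (d' : C) = ⟨d'.1, d'.2⟩ :=
      Submodule.linearProjOfIsCompl_apply_left hQ ⟨d'.1, d'.2⟩
    rw [this]
    rfl
  refine ⟨α, fun d => ?_⟩
  have hcomp : ∀ i, rc (K := K) (π d) i = π ⟨rc (K := K) (d : C) i, rc_mem d.2 i⟩ := by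
    intro i
    have h2 : ((MulOpposite.op (DualAlg.ofLin ((bC K C).coord i))) • d : D)
        = ⟨rc (K := K) (d : C) i, rc_mem d.2 i⟩ := by
      apply Subtype.ext
      show (MulOpposite.op (DualAlg.ofLin ((bC K C).coord i))) • (d : C) = rc (K := K) (d : C) i
      rw [op_smul_def]
      exact (rc_apply (d : C) i).symm
    calc rc (K := K) (π d) i
        = ract K C (DualAlg.ofLin ((bC K C).coord i)) (π d) := rc_apply _ i
      _ = (MulOpposite.op (DualAlg.ofLin ((bC K C).coord i))) • π d := (op_smul_def K C _ _).symm
      _ = π ((MulOpposite.op (DualAlg.ofLin ((bC K C).coord i))) • d) := (π.map_smul _ _).symm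
      _ = _ := by rw [h2]
  set s : Finset (bIdx K C) := (rc (K := K) (d : C)).support with hs
  set s' : Finset (bIdx K C) := (rc (K := K) (π d)).support with hs'
  have hzero : ∀ i, rc (K := K) (d : C) i = 0 → rc (K := K) (π d) i = 0 := by
    intro i h0
    rw [hcomp i]
    convert map_zero π using 2
    exact Subtype.ext h0
  calc lact K C α (d : C)
      = ∑ i ∈ s, α (rc (K := K) (d : C) i) • (bC K C) i := lact_repr α (d : C) (niceRepr (d : C))
    _ = ∑ i ∈ s, (Coalgebra.counit (rc (K := K) (π d) i) : K) • (bC K C) i := by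
        refine Finset.sum_congr rfl fun i _ => ?_
        rw [hcomp i, hα ⟨rc (K := K) (d : C) i, rc_mem d.2 i⟩]
    _ = ∑ i ∈ s ∪ s', (Coalgebra.counit (rc (K := K) (π d) i) : K) • (bC K C) i := by
        refine Finset.sum_subset Finset.subset_union_left fun i _ hi => ?_
        rw [hzero i (Finsupp.notMem_support_iff.mp (fun hmem => hi (by rwa [hs])))]
        simp
    _ = ∑ i ∈ s', (Coalgebra.counit (rc (K := K) (π d) i) : K) • (bC K C) i := by
        refine (Finset.sum_subset Finset.subset_union_right fun i _ hi => ?_).symm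
        rw [Finsupp.notMem_support_iff.mp (fun hmem => hi (by rwa [hs']))]
        simp
    _ = π d := counit_sum (niceRepr (π d))

/-- `A` is an essential submodule of `B`. -/
def Ess (A B : Submodule 𝓡 C) : Prop :=
  A ≤ B ∧ ∀ N : Submodule 𝓡 C, N ≤ B → N ⊓ A = ⊥ → N = ⊥

lemma Ess.refl (A : Submodule 𝓡 C) : Ess A A :=
  ⟨le_rfl, fun N hN h => (inf_eq_left.mpr hN).symm.trans h⟩

lemma Ess.trans' {A B B' : Submodule 𝓡 C} (h1 : Ess A B) (h2 : Ess B B') : Ess A B' := by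
  refine ⟨h1.1.trans h2.1, fun N hN hNA => ?_⟩
  refine h2.2 N hN ?_
  refine h1.2 (N ⊓ B) inf_le_right ?_
  rw [inf_assoc, inf_eq_right.mpr h1.1, hNA]

lemma Ess.mono_right {A B B' : Submodule 𝓡 C} (h : Ess A B) (h1 : A ≤ B') (h2 : B' ≤ B) :
    Ess A B' := ⟨h1, fun N hN => h.2 N (hN.trans h2)⟩

lemma Ess.bot_right {B : Submodule 𝓡 C} (h : Ess ⊥ B) : B = ⊥ :=
  h.2 B le_rfl (inf_bot_eq _)

/-- projection onto `E` along `T`, defined on `E ⊔ T`. -/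
lemma exists_proj (E T : Submodule 𝓡 C) (hdisj : E ⊓ T = ⊥) :
    ∃ π : ↥(E ⊔ T) →ₗ[𝓡] C, ∀ x : ↥(E ⊔ T), π x ∈ E ∧ (x : C) - π x ∈ T := by
  classical
  set E' : Submodule 𝓡 ↥(E ⊔ T) := E.comap (E ⊔ T).subtype with hE'
  set T' : Submodule 𝓡 ↥(E ⊔ T) := T.comap (E ⊔ T).subtype with hT'
  have hc : IsCompl E' T' := by
    constructor
    · rw [disjoint_iff, Submodule.eq_bot_iff]
      rintro x ⟨h1, h2⟩
      have hx : (x : C) ∈ E ⊓ T := ⟨h1, h2⟩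
      rw [hdisj, Submodule.mem_bot] at hx
      exact Subtype.ext hx
    · rw [codisjoint_iff, eq_top_iff]
      intro x _
      obtain ⟨e, he, t, ht, hx⟩ := Submodule.mem_sup.mp x.2
      have hxe : x = (⟨e, Submodule.mem_sup_left he⟩ : ↥(E ⊔ T))
          + ⟨t, Submodule.mem_sup_right ht⟩ := Subtype.ext (by rw [← hx]; rfl)
      rw [hxe]
      exact Submodule.add_mem _
        (Submodule.mem_sup_left (show _ ∈ E' from he))
        (Submodule.mem_sup_right (show _ ∈ T' from ht))
  set p := Submodule.linearProjOfIsCompl E' T' hc with hp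
  refine ⟨(E ⊔ T).subtype ∘ₗ E'.subtype ∘ₗ p, fun x => ?_⟩
  constructor
  · exact Submodule.mem_comap.mp (p x).2
  · have h0 : p (x - (E'.subtype (p x))) = 0 := by
      rw [map_sub]
      have : p (E'.subtype (p x)) = p x := Submodule.linearProjOfIsCompl_apply_left hc (p x)
      rw [this, sub_self]
    have hker : x - (E'.subtype (p x)) ∈ T' := by
      rw [← Submodule.linearProjOfIsCompl_ker hc]
      exact h0
    exact hker

lemma ess_sup {A B X : Submodule 𝓡 C} (h : Ess A B) (hBX : B ⊓ X = ⊥) :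
    Ess (A ⊔ X) (B ⊔ X) := by
  obtain ⟨π, hπ⟩ := exists_proj B X hBX
  refine ⟨sup_le_sup_right h.1 X, fun N hN hNAX => ?_⟩
  set N' : Submodule 𝓡 C := Submodule.map π (N.comap (B ⊔ X).subtype) with hN'def
  have hN'B : N' ≤ B := by
    rintro y ⟨x, hx, rfl⟩
    exact (hπ x).1
  have hN'A : N' ⊓ A = ⊥ := by
    rw [Submodule.eq_bot_iff]
    rintro y ⟨hy1, hyA⟩
    obtain ⟨x, hx, rfl⟩ := hy1
    have hmem : (x : C) ∈ A ⊔ X := by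
      have hsplit : (x : C) = π x + ((x : C) - π x) := by abel
      rw [hsplit]
      exact Submodule.add_mem _ (Submodule.mem_sup_left hyA)
        (Submodule.mem_sup_right (hπ x).2)
    have hx0 : (x : C) ∈ N ⊓ (A ⊔ X) := ⟨hx, hmem⟩
    rw [hNAX, Submodule.mem_bot] at hx0
    rw [show x = 0 from Subtype.ext hx0, map_zero]
  have hN'bot : N' = ⊥ := h.2 N' hN'B hN'A
  rw [Submodule.eq_bot_iff]
  intro x hxN
  have hx' : π ⟨x, hN hxN⟩ = 0 := by
    have hmem : π ⟨x, hN hxN⟩ ∈ N' := ⟨⟨x, hN hxN⟩, hxN, rfl⟩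
    rw [hN'bot, Submodule.mem_bot] at hmem
    exact hmem
  have hxX : x ∈ X := by
    have h2 := (hπ ⟨x, hN hxN⟩).2
    rw [hx'] at h2
    simpa using h2
  have hfin : x ∈ N ⊓ (A ⊔ X) := ⟨hxN, Submodule.mem_sup_right hxX⟩
  rw [hNAX, Submodule.mem_bot] at hfin
  exact hfin

/-- maximal complement of `E` above `W` -/
lemma exists_max_compl (E W : Submodule 𝓡 C) (hW : E ⊓ W = ⊥) :
    ∃ T, E ⊓ T = ⊥ ∧ W ≤ T ∧ ∀ T', E ⊓ T' = ⊥ → T ≤ T' → T = T' := by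
  obtain ⟨T, hWT, hTmem, hTmax⟩ := zorn_le_nonempty₀ {T' : Submodule 𝓡 C | E ⊓ T' = ⊥}
    (fun c hc hchain y hy => by
      refine ⟨sSup c, ?_, fun z hz => le_sSup hz⟩
      rw [Set.mem_setOf_eq, Submodule.eq_bot_iff]
      rintro x ⟨hxE, hxS⟩
      have hxS' : x ∈ sSup c := hxS
      rw [Submodule.mem_sSup_of_directed ⟨y, hy⟩ hchain.directedOn] at hxS'
      obtain ⟨T', hT'c, hxT'⟩ := hxS' 
      have : x ∈ E ⊓ T' := ⟨hxE, hxT'⟩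
      rw [hc hT'c, Submodule.mem_bot] at this
      exact this) W hW
  exact ⟨T, hTmem, hWT, fun T' h1 h2 => le_antisymm h2 (hTmax h1 h2)⟩

/-- maximal essential extension of `V` above `X` -/
lemma exists_max_ess (V X : Submodule 𝓡 C) (hX : Ess V X) :
    ∃ E, Ess V E ∧ X ≤ E ∧ ∀ M, Ess V M → E ≤ M → E = M := by
  obtain ⟨E, hXE, hEmem, hEmax⟩ := zorn_le_nonempty₀ {M : Submodule 𝓡 C | Ess V M}
    (fun c hc hchain y hy => by
      refine ⟨sSup c, ?_, fun z hz => le_sSup hz⟩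
      rw [Set.mem_setOf_eq]
      constructor
      · exact le_trans (hc hy).1 (le_sSup hy)
      · intro N hN hNV
        rw [Submodule.eq_bot_iff]
        intro x hxN
        have hxS := hN hxN
        rw [Submodule.mem_sSup_of_directed ⟨y, hy⟩ hchain.directedOn] at hxS
        obtain ⟨M, hMc, hxM⟩ := hxS
        have hspan : Submodule.span 𝓡 {x} ≤ M := by
          rw [Submodule.span_le, Set.singleton_subset_iff]; exact hxM
        have hspanN : Submodule.span 𝓡 {x} ≤ N := by
          rw [Submodule.span_le, Set.singleton_subset_iff]; exact hxN
        have hbot : Submodule.span 𝓡 {x} = ⊥ := by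
          refine (hc hMc).2 _ hspan ?_
          rw [← le_bot_iff, ← hNV]
          exact le_inf (le_trans inf_le_left hspanN) inf_le_right
        have := hbot ▸ Submodule.mem_span_singleton_self x
        rwa [Submodule.mem_bot] at this) X hX
  exact ⟨E, hEmem, hXE, fun M hM h2 => le_antisymm h2 (hEmax hM h2)⟩

/-- Key lemma: a maximal essential extension is a direct summand. -/
lemma key_summand (V E T : Submodule 𝓡 C)
    (hVE : Ess V E)
    (hEmax : ∀ M, Ess V M → E ≤ M → E = M)
    (hT : E ⊓ T = ⊥) (hTmax : ∀ T', E ⊓ T' = ⊥ → T ≤ T' → T = T') :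
    E ⊔ T = ⊤ := by
  obtain ⟨π, hπ⟩ := exists_proj E T hT
  obtain ⟨α, hα⟩ := exists_lact_extends (E ⊔ T) π
  set ψ := lactHom (K := K) (C := C) α with hψdef
  have hψπ : ∀ x : ↥(E ⊔ T), ψ (x : C) = π x := fun x => hα x
  have hψE : ∀ e ∈ E, ψ e = e := by
    intro e he
    have h1 := hψπ ⟨e, Submodule.mem_sup_left he⟩
    have h2 := hπ ⟨e, Submodule.mem_sup_left he⟩
    -- e - π = 0 since it is in E ⊓ T
    have h3 : e - π ⟨e, Submodule.mem_sup_left he⟩ ∈ E ⊓ T :=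
      ⟨Submodule.sub_mem _ he h2.1, h2.2⟩
    rw [hT, Submodule.mem_bot, sub_eq_zero] at h3
    rw [h1, ← h3]
  have hψT : ∀ t ∈ T, ψ t = 0 := by
    intro t ht
    have h1 := hψπ ⟨t, Submodule.mem_sup_right ht⟩
    have h2 := hπ ⟨t, Submodule.mem_sup_right ht⟩
    have h3 : π ⟨t, Submodule.mem_sup_right ht⟩ ∈ E ⊓ T := by
      refine ⟨h2.1, ?_⟩
      have := h2.2
      have heq : π ⟨t, Submodule.mem_sup_right ht⟩ = t - (t - π ⟨t, Submodule.mem_sup_right ht⟩) := by abel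
      rw [heq]
      exact Submodule.sub_mem _ ht this
    rw [hT, Submodule.mem_bot] at h3
    rw [h1, h3]
  have hErange : E ≤ LinearMap.range ψ := fun e he => ⟨e, hψE e he⟩
  have hkerT : LinearMap.ker ψ = T := by
    refine (hTmax _ ?_ ?_).symm
    · rw [Submodule.eq_bot_iff]
      rintro x ⟨hxE, hxK⟩
      have hxK' : ψ x = 0 := hxK
      rw [← hψE x hxE, hxK']
    · intro t ht
      rw [LinearMap.mem_ker]
      exact hψT t ht
  have hrange : LinearMap.range ψ = E := by
    refine (hEmax _ ⟨hVE.1.trans hErange, ?_⟩ hErange).symm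
    intro N hN hNV
    have hNE : N ⊓ E = ⊥ := by
      refine hVE.2 (N ⊓ E) inf_le_right ?_
      rw [inf_assoc, inf_eq_right.mpr hVE.1, hNV]
    have hMT : T = N.comap ψ := by
      refine hTmax (N.comap ψ) ?_ ?_
      · rw [Submodule.eq_bot_iff]
        rintro x ⟨hxE, hxM⟩
        have hxM' : x ∈ N.comap ψ := hxM
        rw [Submodule.mem_comap, hψE x hxE] at hxM'
        have hx : x ∈ N ⊓ E := ⟨hxM', hxE⟩
        rwa [hNE, Submodule.mem_bot] at hx
      · intro t ht
        rw [Submodule.mem_comap, hψT t ht]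
        exact N.zero_mem
    rw [Submodule.eq_bot_iff]
    intro n hn
    obtain ⟨x, rfl⟩ := hN hn
    have hxT : x ∈ T := by
      rw [hMT, Submodule.mem_comap]
      exact hn
    rw [← hkerT, LinearMap.mem_ker] at hxT
    exact hxT
  rw [eq_top_iff]
  intro c _
  have h1 : ψ c ∈ E := hrange ▸ LinearMap.mem_range_self ψ c
  have h2 : c - ψ c ∈ T := by
    rw [← hkerT, LinearMap.mem_ker, map_sub, hψE _ h1, sub_self]
  have : c = ψ c + (c - ψ c) := by abel
  rw [this]
  exact Submodule.add_mem _ (Submodule.mem_sup_left h1) (Submodule.mem_sup_right h2)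

lemma sub_proj_mem {E T : Submodule 𝓡 C} (hc : IsCompl E T) (m : C) :
    m - (Submodule.linearProjOfIsCompl E T hc m : C) ∈ T := by
  have h0 : (Submodule.linearProjOfIsCompl E T hc)
      (m - (Submodule.linearProjOfIsCompl E T hc m : C)) = 0 := by
    rw [map_sub, show (Submodule.linearProjOfIsCompl E T hc) ((Submodule.linearProjOfIsCompl E T hc m : C)) = _ from Submodule.linearProjOfIsCompl_apply_left hc _, sub_self]
  have h1 := LinearMap.mem_ker.mpr h0
  rwa [show LinearMap.ker (Submodule.linearProjOfIsCompl E T hc) = T from Submodule.linearProjOfIsCompl_ker hc] at h1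

lemma ess_biSup {ι' : Type} [DecidableEq ι'] (Pm Qm : ι' → Submodule 𝓡 C) :
    ∀ F : Finset ι',
      (∀ j ∈ F, Ess (Qm j) (Pm j)) →
      (∀ j ∈ F, Pm j ⊓ (⨆ k ∈ F.erase j, Pm k) = ⊥) →
      Ess (⨆ j ∈ F, Qm j) (⨆ j ∈ F, Pm j) := by
  classical
  intro F
  induction F using Finset.induction with
  | empty => intro _ _; simpa using Ess.refl (⊥ : Submodule 𝓡 C)
  | @insert j₀ F' hj₀ ih =>
    intro hess hind
    rw [Finset.iSup_insert, Finset.iSup_insert]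
    have hdisj : Pm j₀ ⊓ (⨆ k ∈ F', Pm k) = ⊥ := by
      have h := hind j₀ (Finset.mem_insert_self _ _)
      rwa [Finset.erase_insert hj₀] at h
    have hih : Ess (⨆ j ∈ F', Qm j) (⨆ j ∈ F', Pm j) := by
      refine ih (fun j hj => hess j (Finset.mem_insert_of_mem hj)) (fun j hj => ?_)
      have hmono : (⨆ k ∈ F'.erase j, Pm k) ≤ ⨆ k ∈ (insert j₀ F').erase j, Pm k := by
        refine biSup_mono fun k hk => ?_
        rw [Finset.mem_erase] at hk ⊢
        exact ⟨hk.1, Finset.mem_insert_of_mem hk.2⟩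
      rw [← le_bot_iff, ← hind j (Finset.mem_insert_of_mem hj)]
      exact inf_le_inf_left _ hmono
    have hQP : (⨆ j ∈ F', Qm j) ≤ (⨆ j ∈ F', Pm j) :=
      iSup_mono fun j => iSup_mono fun hj => (hess j (Finset.mem_insert_of_mem hj)).1
    have h1 : Ess (Qm j₀ ⊔ ⨆ j ∈ F', Qm j) (Pm j₀ ⊔ ⨆ j ∈ F', Qm j) := by
      refine ess_sup (hess j₀ (Finset.mem_insert_self _ _)) ?_
      rw [← le_bot_iff, ← hdisj]
      exact inf_le_inf_left _ hQP
    have h2 : Ess ((⨆ j ∈ F', Qm j) ⊔ Pm j₀) ((⨆ j ∈ F', Pm j) ⊔ Pm j₀) := by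
      refine ess_sup hih ?_
      rw [inf_comm]
      exact hdisj
    refine Ess.trans' h1 ?_
    rw [sup_comm (Pm j₀) (⨆ j ∈ F', Qm j), sup_comm (Pm j₀) (⨆ j ∈ F', Pm j)]
    exact h2

lemma closed_biSup {ι' : Type} [DecidableEq ι'] (Pm Qm : ι' → Submodule 𝓡 C) :
    ∀ F : Finset ι',
      (∀ j ∈ F, Ess (Qm j) (Pm j)) →
      (∀ j ∈ F, ∀ M, Ess (Qm j) M → Pm j ≤ M → Pm j = M) →
      (∀ j ∈ F, Pm j ⊓ (⨆ k ∈ F.erase j, Pm k) = ⊥) →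
      ∀ M : Submodule 𝓡 C, Ess (⨆ j ∈ F, Qm j) M → (⨆ j ∈ F, Pm j) ≤ M →
        M = ⨆ j ∈ F, Pm j := by
  classical
  intro F
  induction F using Finset.induction with
  | empty =>
    intro _ _ _ M hM _
    have : (⨆ j ∈ (∅ : Finset ι'), Qm j) = (⊥ : Submodule 𝓡 C) := by simp
    rw [this] at hM
    have hMbot := Ess.bot_right hM
    simpa using hMbot
  | @insert j₀ F' hj₀ ih =>
    intro hess hmax hind M hessM hle
    have hrestr_ess : ∀ j ∈ F', Ess (Qm j) (Pm j) :=
      fun j hj => hess j (Finset.mem_insert_of_mem hj)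
    have hrestr_max : ∀ j ∈ F', ∀ M', Ess (Qm j) M' → Pm j ≤ M' → Pm j = M' :=
      fun j hj => hmax j (Finset.mem_insert_of_mem hj)
    have hrestr_ind : ∀ j ∈ F', Pm j ⊓ (⨆ k ∈ F'.erase j, Pm k) = ⊥ := by
      intro j hj
      have hmono : (⨆ k ∈ F'.erase j, Pm k) ≤ ⨆ k ∈ (insert j₀ F').erase j, Pm k := by
        refine biSup_mono fun k hk => ?_
        rw [Finset.mem_erase] at hk ⊢
        exact ⟨hk.1, Finset.mem_insert_of_mem hk.2⟩
      rw [← le_bot_iff, ← hind j (Finset.mem_insert_of_mem hj)]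
      exact inf_le_inf_left _ hmono
    rw [Finset.iSup_insert] at hle ⊢
    rw [Finset.iSup_insert] at hessM
    have hdisj : Pm j₀ ⊓ (⨆ j ∈ F', Pm j) = ⊥ := by
      have h := hind j₀ (Finset.mem_insert_self _ _)
      rwa [Finset.erase_insert hj₀] at h
    obtain ⟨T₁, hT₁disj, hT₁ge, hT₁max⟩ := exists_max_compl (Pm j₀) (⨆ j ∈ F', Pm j) hdisj
    have htop : Pm j₀ ⊔ T₁ = ⊤ :=
      key_summand (Qm j₀) (Pm j₀) T₁ (hess j₀ (Finset.mem_insert_self _ _))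
        (hmax j₀ (Finset.mem_insert_self _ _)) hT₁disj hT₁max
    have hcompl : IsCompl (Pm j₀) T₁ :=
      ⟨disjoint_iff.mpr hT₁disj, codisjoint_iff.mpr htop⟩
    set p := Submodule.linearProjOfIsCompl (Pm j₀) T₁ hcompl with hpdef
    have hihEss : Ess (⨆ j ∈ F', Qm j) (⨆ j ∈ F', Pm j) :=
      ess_biSup Pm Qm F' hrestr_ess hrestr_ind
    have hQ0le : Qm j₀ ≤ Pm j₀ := (hess j₀ (Finset.mem_insert_self _ _)).1
    have hV₂le : (⨆ j ∈ F', Qm j) ≤ (⨆ j ∈ F', Pm j) := hihEss.1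
    have hMT : M ⊓ T₁ = ⨆ j ∈ F', Pm j := by
      refine ih hrestr_ess hrestr_max hrestr_ind (M ⊓ T₁) ?_ (le_inf (le_trans le_sup_right hle) hT₁ge)
      constructor
      · exact le_trans hV₂le (le_inf (le_trans le_sup_right hle) hT₁ge)
      · intro N hN hNV
        have hNE₂ : N ⊓ (⨆ j ∈ F', Pm j) = ⊥ := by
          refine hihEss.2 _ inf_le_right ?_
          rw [inf_assoc, inf_eq_right.mpr hV₂le, hNV]
        have hNEE : N ⊓ (Pm j₀ ⊔ ⨆ j ∈ F', Pm j) = ⊥ := by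
          rw [Submodule.eq_bot_iff]
          rintro x ⟨hxN, hxEE⟩
          obtain ⟨a, ha, b, hb, hab⟩ := Submodule.mem_sup.mp hxEE
          have hxT : x ∈ T₁ := (hN hxN).2
          have haT : a ∈ T₁ ⊓ Pm j₀ := by
            refine ⟨?_, ha⟩
            have : a = x - b := by rw [← hab]; abel
            rw [this]
            exact Submodule.sub_mem _ hxT (hT₁ge hb)
          rw [inf_comm, hT₁disj, Submodule.mem_bot] at haT
          have hxb : x ∈ N ⊓ (⨆ j ∈ F', Pm j) := by
            refine ⟨hxN, ?_⟩
            rw [← hab, haT, zero_add]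
            exact hb
          rwa [hNE₂, Submodule.mem_bot] at hxb
        refine hessM.2 N (le_trans hN inf_le_left) ?_
        rw [← le_bot_iff, ← hNEE]
        exact inf_le_inf_left _ (sup_le_sup hQ0le hV₂le)
    refine le_antisymm ?_ hle
    intro m hm
    have he : (p m : C) ∈ Pm j₀ := (p m).2
    have hme : m - (p m : C) ∈ M ⊓ T₁ := by
      refine ⟨Submodule.sub_mem _ hm (hle (Submodule.mem_sup_left he)), sub_proj_mem hcompl m⟩
    rw [hMT] at hme
    have : m = (p m : C) + (m - (p m : C)) := by abel
    rw [this]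
    exact Submodule.add_mem _ (Submodule.mem_sup_left he) (Submodule.mem_sup_right hme)

lemma restrictScalars_lt {A B : Submodule 𝓡 C} (h : A < B) :
    A.restrictScalars K < B.restrictScalars K := by
  refine lt_of_le_of_ne (fun x hx => h.le hx) (fun heq => h.ne ?_)
  exact Submodule.restrictScalars_injective K _ _ heq

lemma mem_biInf_ker {I : Type} (f : I → (C →ₗ[𝓡] DualAlg K C)) (G : Finset I) {x : C} :
    x ∈ (⨅ i ∈ G, LinearMap.ker (f i)) ↔ ∀ i ∈ G, f i x = 0 := by
  simp [Submodule.mem_iInf]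

lemma exists_finset_sep {I : Type} (f : I → (C →ₗ[𝓡] DualAlg K C))
    (hsep : ∀ x : C, (∀ i, f i x = 0) → x = 0)
    (V : Submodule 𝓡 C) (hV : FiniteDimensional K (V.restrictScalars K)) :
    ∃ G : Finset I, ∀ x ∈ V, (∀ i ∈ G, f i x = 0) → x = 0 := by
  classical
  have hfd : ∀ G : Finset I,
      FiniteDimensional K ((V ⊓ ⨅ i ∈ G, LinearMap.ker (f i)).restrictScalars K) := by
    intro G
    refine Submodule.finiteDimensional_of_le (S₂ := V.restrictScalars K) ?_
    intro x hx
    exact hx.1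
  set S : Set ℕ := {n | ∃ G : Finset I,
    Module.finrank K ((V ⊓ ⨅ i ∈ G, LinearMap.ker (f i)).restrictScalars K) = n} with hSdef
  have hne : S.Nonempty := ⟨_, ⟨(∅ : Finset I), rfl⟩⟩
  obtain ⟨G₀, hG₀⟩ := Nat.sInf_mem hne
  have hbot : V ⊓ ⨅ i ∈ G₀, LinearMap.ker (f i) = ⊥ := by
    by_contra hne0
    obtain ⟨x, hxmem, hx0⟩ := Submodule.ne_bot_iff _ |>.mp hne0
    obtain ⟨i, hi⟩ : ∃ i, f i x ≠ 0 := by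
      by_contra h
      push_neg at h
      exact hx0 (hsep x h)
    have hxker : ∀ j ∈ G₀, f j x = 0 := (mem_biInf_ker f G₀).mp hxmem.2
    set W' := V ⊓ ⨅ j ∈ insert i G₀, LinearMap.ker (f j) with hW'def
    have hlt : W' < V ⊓ ⨅ j ∈ G₀, LinearMap.ker (f j) := by
      refine lt_of_le_of_ne ?_ ?_
      · refine inf_le_inf_left _ ?_
        rw [Finset.iInf_insert]
        exact inf_le_right
      · intro heq
        have hxW' : x ∈ W' := heq.symm ▸ hxmem
        exact hi ((mem_biInf_ker f _).mp hxW'.2 i (Finset.mem_insert_self _ _))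
    have hrlt : Module.finrank K (W'.restrictScalars K)
        < Module.finrank K ((V ⊓ ⨅ j ∈ G₀, LinearMap.ker (f j)).restrictScalars K) := by
      have := hfd G₀
      exact Submodule.finrank_lt_finrank_of_lt (restrictScalars_lt hlt)
    have hmem : Module.finrank K (W'.restrictScalars K) ∈ S := ⟨insert i G₀, rfl⟩
    have hge := Nat.sInf_le hmem
    omega
  refine ⟨G₀, fun x hxV hxf => ?_⟩
  have hx : x ∈ V ⊓ ⨅ i ∈ G₀, LinearMap.ker (f i) :=
    ⟨hxV, (mem_biInf_ker f G₀).mpr hxf⟩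
  rwa [hbot, Submodule.mem_bot] at hx

/-- A good family of pairs `(V, E)` : `V` finite-dimensional nonzero, `E` a maximal
essential extension of `V`, and the `E`'s independent. -/
def Good (𝒜 : Set (Submodule 𝓡 C × Submodule 𝓡 C)) : Prop :=
  (∀ p ∈ 𝒜,
    FiniteDimensional K ((p.1).restrictScalars K) ∧
    p.1 ≠ ⊥ ∧
    Ess p.1 p.2 ∧
    (∀ M, Ess p.1 M → p.2 ≤ M → p.2 = M)) ∧
  (∀ p ∈ 𝒜, p.2 ⊓ sSup (Prod.snd '' (𝒜 \ {p})) = ⊥)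

lemma mem_sSup_image_snd {𝒜 : Set (Submodule 𝓡 C × Submodule 𝓡 C)} {x : C}
    (hx : x ∈ sSup (Prod.snd '' 𝒜)) :
    ∃ Q : Finset (Submodule 𝓡 C × Submodule 𝓡 C), ↑Q ⊆ 𝒜 ∧ x ∈ ⨆ q ∈ Q, q.2 := by
  classical
  rw [sSup_image] at hx
  have hx2 : x ∈ ⨆ q : Submodule 𝓡 C × Submodule 𝓡 C, ⨆ _ : q ∈ 𝒜, q.2 := hx
  rw [Submodule.mem_iSup_iff_exists_finset] at hx2
  obtain ⟨s, hs⟩ := hx2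
  refine ⟨s.filter (· ∈ 𝒜), fun q hq => (Finset.mem_filter.mp (Finset.mem_coe.mp hq)).2, ?_⟩
  have hle : (⨆ q ∈ s, ⨆ _ : q ∈ 𝒜, q.2) ≤ ⨆ q ∈ s.filter (· ∈ 𝒜), q.2 := by
    refine iSup₂_le fun q hq => iSup_le fun hq𝒜 => ?_
    exact le_iSup₂ (f := fun q _ => q.2) q (Finset.mem_filter.mpr ⟨hq, hq𝒜⟩)
  exact hle hs

lemma chain_finset_bound {β : Type*} (c : Set (Set β)) (hchain : IsChain (· ⊆ ·) c)
    (A₀ : Set β) (hA₀ : A₀ ∈ c) :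
    ∀ Q : Finset β, (∀ q ∈ Q, ∃ B ∈ c, q ∈ B) → ∃ B ∈ c, A₀ ⊆ B ∧ ∀ q ∈ Q, q ∈ B := by
  classical
  intro Q
  induction Q using Finset.induction with
  | empty => intro _; exact ⟨A₀, hA₀, subset_rfl, by simp⟩
  | @insert q₀ Q' hq₀ ih =>
    intro hQ
    obtain ⟨B, hBc, hA₀B, hB⟩ := ih (fun q hq => hQ q (Finset.mem_insert_of_mem hq))
    obtain ⟨B₀, hB₀c, hq₀B₀⟩ := hQ q₀ (Finset.mem_insert_self _ _)
    rcases hchain.total hBc hB₀c with h | h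
    · refine ⟨B₀, hB₀c, hA₀B.trans h, fun q hq => ?_⟩
      rcases Finset.mem_insert.mp hq with rfl | hq'
      · exact hq₀B₀
      · exact h (hB q hq')
    · refine ⟨B, hBc, hA₀B, fun q hq => ?_⟩
      rcases Finset.mem_insert.mp hq with rfl | hq'
      · exact h hq₀B₀
      · exact hB q hq'

lemma exists_maximal_good :
    ∃ 𝒜 : Set (Submodule 𝓡 C × Submodule 𝓡 C), Good 𝒜 ∧
      ∀ 𝒜', Good 𝒜' → 𝒜 ⊆ 𝒜' → 𝒜' ⊆ 𝒜 := by
  have hchainub : ∀ c ⊆ {𝒜 : Set (Submodule 𝓡 C × Submodule 𝓡 C) | Good 𝒜},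
      IsChain (· ≤ ·) c → ∀ y ∈ c,
      ∃ ub ∈ {𝒜 : Set (Submodule 𝓡 C × Submodule 𝓡 C) | Good 𝒜}, ∀ z ∈ c, z ≤ ub := by
    intro c hc hchain y hy
    refine ⟨⋃₀ c, ⟨?_, ?_⟩, fun z hz => Set.subset_sUnion_of_mem hz⟩
    · rintro p ⟨B, hBc, hpB⟩
      exact (hc hBc).1 p hpB
    · rintro p ⟨A₀, hA₀c, hpA₀⟩
      rw [Submodule.eq_bot_iff]
      rintro x ⟨hxp, hxS⟩
      have hxS' : x ∈ sSup (Prod.snd '' (⋃₀ c \ {p})) := hxS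
      obtain ⟨Q, hQsub, hxQ⟩ := mem_sSup_image_snd hxS'
      obtain ⟨B, hBc, hA₀B, hBQ⟩ := chain_finset_bound c hchain A₀ hA₀c Q
        (fun q hq => by
          obtain ⟨B', hB'c, hqB'⟩ := (hQsub hq).1
          exact ⟨B', hB'c, hqB'⟩)
      have hle : (⨆ q ∈ Q, q.2) ≤ sSup (Prod.snd '' (B \ {p})) := by
        refine iSup₂_le fun q hq => le_sSup ?_
        exact ⟨q, ⟨hBQ q hq, (hQsub hq).2⟩, rfl⟩
      have hxB : x ∈ p.2 ⊓ sSup (Prod.snd '' (B \ {p})) := ⟨hxp, hle hxQ⟩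
      rwa [(hc hBc).2 p (hA₀B hpA₀), Submodule.mem_bot] at hxB
  have hempty : (∅ : Set (Submodule 𝓡 C × Submodule 𝓡 C)) ∈
      {𝒜 : Set (Submodule 𝓡 C × Submodule 𝓡 C) | Good 𝒜} :=
    ⟨fun p hp => absurd hp (Set.notMem_empty p),
      fun p hp => absurd hp (Set.notMem_empty p)⟩
  obtain ⟨𝒜, -, h𝒜, hmax⟩ := zorn_le_nonempty₀
    {𝒜 : Set (Submodule 𝓡 C × Submodule 𝓡 C) | Good 𝒜} hchainub ∅ hempty
  exact ⟨𝒜, h𝒜, fun 𝒜' h1 h2 => hmax h1 h2⟩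

lemma maximal_good_ess {𝒜 : Set (Submodule 𝓡 C × Submodule 𝓡 C)}
    (hG : Good 𝒜) (hmax : ∀ 𝒜', Good 𝒜' → 𝒜 ⊆ 𝒜' → 𝒜' ⊆ 𝒜)
    (N : Submodule 𝓡 C) (hN : N ⊓ sSup (Prod.snd '' 𝒜) = ⊥) : N = ⊥ := by
  classical
  set E := sSup (Prod.snd '' 𝒜) with hEdef
  by_contra hNne
  obtain ⟨x, hxN, hx0⟩ := (Submodule.ne_bot_iff _).mp hNne
  set V := Submodule.span 𝓡 {x} with hVdef
  have hVN : V ≤ N := by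
    rw [hVdef, Submodule.span_le, Set.singleton_subset_iff]; exact hxN
  have hVne : V ≠ ⊥ := by
    intro h
    have hmem : x ∈ Submodule.span 𝓡 {x} := Submodule.mem_span_singleton_self x
    rw [← hVdef, h, Submodule.mem_bot] at hmem
    exact hx0 hmem
  obtain ⟨Estar, hEstarEss, hVEstar, hEstarMax⟩ := exists_max_ess V V (Ess.refl V)
  have hEstarE : Estar ⊓ E = ⊥ := by
    rw [Submodule.eq_bot_iff]
    rintro z ⟨hz1, hz2⟩
    have hsp1 : Submodule.span 𝓡 {z} ≤ Estar := by
      rw [Submodule.span_le, Set.singleton_subset_iff]; exact hz1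
    have hsp2 : Submodule.span 𝓡 {z} ≤ E := by
      rw [Submodule.span_le, Set.singleton_subset_iff]; exact hz2
    have hbot : Submodule.span 𝓡 {z} ⊓ V = ⊥ := by
      rw [← le_bot_iff, ← hN]
      exact le_inf (le_trans inf_le_right hVN) (le_trans inf_le_left hsp2)
    have := hEstarEss.2 _ hsp1 hbot
    have hz := this ▸ Submodule.mem_span_singleton_self z
    rwa [Submodule.mem_bot] at hz
  set q : Submodule 𝓡 C × Submodule 𝓡 C := (V, Estar) with hqdef
  have hq𝒜 : q ∉ 𝒜 := by
    intro hq
    have hEstarLe : Estar ≤ E := le_sSup ⟨q, hq, rfl⟩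
    have : Estar = ⊥ := by
      rw [← hEstarE, inf_eq_left.mpr hEstarLe]
    exact hVne (le_bot_iff.mp (this ▸ hVEstar))
  have hGood' : Good (insert q 𝒜) := by
    constructor
    · rintro p hp
      rcases Set.mem_insert_iff.mp hp with rfl | hp𝒜
      · exact ⟨fd_cyclic x, hVne, hEstarEss, hEstarMax⟩
      · exact hG.1 p hp𝒜
    · rintro p hp
      rcases Set.mem_insert_iff.mp hp with rfl | hp𝒜
      · rw [Set.insert_diff_self_of_notMem hq𝒜]
        exact hEstarE
      · have hsub : sSup (Prod.snd '' (insert q 𝒜 \ {p})) ≤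
            sSup (Prod.snd '' (𝒜 \ {p})) ⊔ Estar := by
          refine sSup_le ?_
          rintro y ⟨r, ⟨hr, hrp⟩, rfl⟩
          rcases Set.mem_insert_iff.mp hr with rfl | hr𝒜
          · exact le_sup_right
          · have hrle : r.2 ≤ sSup (Prod.snd '' (𝒜 \ {p})) :=
              le_sSup ⟨r, ⟨hr𝒜, hrp⟩, rfl⟩
            exact le_trans hrle le_sup_left
        rw [Submodule.eq_bot_iff]
        rintro z ⟨hz1, hz2⟩
        have hz2' := hsub hz2
        obtain ⟨a, ha, b, hb, hab⟩ := Submodule.mem_sup.mp hz2'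
        have hbE : b ∈ Estar ⊓ E := by
          refine ⟨hb, ?_⟩
          have hbz : b = z - a := by rw [← hab]; abel
          rw [hbz]
          have hpE : p.2 ≤ E := le_sSup ⟨p, hp𝒜, rfl⟩
          have haE : sSup (Prod.snd '' (𝒜 \ {p})) ≤ E :=
            sSup_le_sSup (Set.image_mono Set.diff_subset)
          exact Submodule.sub_mem _ (hpE hz1) (haE ha)
        rw [hEstarE, Submodule.mem_bot] at hbE
        have hz3 : z ∈ p.2 ⊓ sSup (Prod.snd '' (𝒜 \ {p})) := by
          refine ⟨hz1, ?_⟩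
          rw [← hab, hbE, add_zero]
          exact ha
        rwa [hG.2 p hp𝒜, Submodule.mem_bot] at hz3
  have hqin : q ∈ 𝒜 := hmax _ hGood' (Set.subset_insert _ _) (Set.mem_insert _ _)
  exact hq𝒜 hqin

lemma maximal_good_top {𝒜 : Set (Submodule 𝓡 C × Submodule 𝓡 C)}
    (hG : Good 𝒜) (hmax : ∀ 𝒜', Good 𝒜' → 𝒜 ⊆ 𝒜' → 𝒜' ⊆ 𝒜) :
    sSup (Prod.snd '' 𝒜) = ⊤ := by
  classical
  set E := sSup (Prod.snd '' 𝒜) with hEdef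
  by_contra hne
  have hex : ∃ c : C, c ∉ E := by
    by_contra h
    push_neg at h
    exact hne (Submodule.eq_top_iff'.mpr h)
  obtain ⟨c, hc⟩ := hex
  set D := Submodule.span 𝓡 {c} with hDdef
  have hDE_fd : FiniteDimensional K ((D ⊓ E).restrictScalars K) := by
    have := fd_cyclic (K := K) (C := C) c
    exact Submodule.finiteDimensional_of_le
      (show (D ⊓ E).restrictScalars K ≤ D.restrictScalars K from fun z hz => hz.1)
  -- find a finite subfamily F with D ⊓ E ≤ ⨆ p ∈ F, p.2
  obtain ⟨F, hF𝒜, hDEF⟩ : ∃ F : Finset (Submodule 𝓡 C × Submodule 𝓡 C),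
      ↑F ⊆ 𝒜 ∧ D ⊓ E ≤ ⨆ p ∈ F, p.2 := by
    set W := (D ⊓ E).restrictScalars K with hWdef
    set b := Module.finBasis K ↥W with hbdef
    have hmem : ∀ j, ((b j : C)) ∈ E := fun j => (b j).2.2
    have hQ : ∀ j, ∃ Q : Finset (Submodule 𝓡 C × Submodule 𝓡 C),
        ↑Q ⊆ 𝒜 ∧ ((b j : C)) ∈ ⨆ q ∈ Q, q.2 := by
      intro j
      obtain ⟨Q, hQ1, hQ2⟩ := mem_sSup_image_snd (𝒜 := 𝒜) (hmem j)
      exact ⟨Q, hQ1, hQ2⟩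
    choose Q hQ1 hQ2 using hQ
    refine ⟨Finset.univ.biUnion Q, ?_, ?_⟩
    · intro p hp
      obtain ⟨j, _, hj⟩ := Finset.mem_biUnion.mp (Finset.mem_coe.mp hp)
      exact hQ1 j (Finset.mem_coe.mpr hj)
    · intro z hz
      have hz' : (⟨z, hz⟩ : ↥W) ∈ (⊤ : Submodule K ↥W) := trivial
      have hrepr := Module.Basis.sum_repr b ⟨z, hz⟩
      have hzeq : z = ∑ j, (b.repr ⟨z, hz⟩ j) • ((b j : C)) := by
        have := congrArg (Submodule.subtype W) hrepr
        simp only [map_sum, map_smul] at this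
        exact this.symm
      rw [hzeq]
      refine Submodule.sum_mem _ fun j _ => ?_
      refine smul_mem_K _ _ ?_
      have hle : (⨆ q ∈ Q j, q.2) ≤ ⨆ p ∈ Finset.univ.biUnion Q, p.2 := by
        refine biSup_mono fun p hp => ?_
        exact Finset.mem_biUnion.mpr ⟨j, Finset.mem_univ j, hp⟩
      exact hle (hQ2 j)
  set EF := ⨆ p ∈ F, (p : Submodule 𝓡 C × Submodule 𝓡 C).2 with hEFdef
  set VF := ⨆ p ∈ F, (p : Submodule 𝓡 C × Submodule 𝓡 C).1 with hVFdef
  have hessF : ∀ p ∈ F, Ess (Prod.fst p) (Prod.snd p) :=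
    fun p hp => (hG.1 p (hF𝒜 hp)).2.2.1
  have hmaxF : ∀ p ∈ F, ∀ M, Ess (Prod.fst p) M → Prod.snd p ≤ M → Prod.snd p = M :=
    fun p hp => (hG.1 p (hF𝒜 hp)).2.2.2
  have hindF : ∀ p ∈ F, Prod.snd p ⊓ (⨆ q ∈ F.erase p, Prod.snd q) = ⊥ := by
    intro p hp
    have hle : (⨆ q ∈ F.erase p, Prod.snd q) ≤ sSup (Prod.snd '' (𝒜 \ {p})) := by
      refine iSup₂_le fun q hq => le_sSup ?_
      have hq' := Finset.mem_erase.mp hq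
      exact ⟨q, ⟨hF𝒜 hq'.2, hq'.1⟩, rfl⟩
    rw [← le_bot_iff, ← hG.2 p (hF𝒜 hp)]
    exact inf_le_inf_left _ hle
  have hihEss : Ess VF EF := ess_biSup Prod.snd Prod.fst F hessF hindF
  have hEFE : EF ≤ E := by
    refine iSup₂_le fun p hp => le_sSup ?_
    exact ⟨p, hF𝒜 hp, rfl⟩
  have hEssH : Ess VF (EF ⊔ D) := by
    refine ⟨le_trans hihEss.1 le_sup_left, ?_⟩
    intro N hNle hNV
    have hNEF : N ⊓ EF = ⊥ := by
      refine hihEss.2 _ inf_le_right ?_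
      rw [inf_assoc, inf_eq_right.mpr hihEss.1, hNV]
    have hNE : N ⊓ E = ⊥ := by
      rw [Submodule.eq_bot_iff]
      rintro z ⟨hzN, hzE⟩
      obtain ⟨e, he, d, hd, hed⟩ := Submodule.mem_sup.mp (hNle hzN)
      have hdDE : d ∈ D ⊓ E := by
        refine ⟨hd, ?_⟩
        have hdz : d = z - e := by rw [← hed]; abel
        rw [hdz]
        exact Submodule.sub_mem _ hzE (hEFE he)
      have hzEF : z ∈ N ⊓ EF := by
        refine ⟨hzN, ?_⟩
        rw [← hed]
        exact Submodule.add_mem _ he (hDEF hdDE)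
      rwa [hNEF, Submodule.mem_bot] at hzEF
    exact maximal_good_ess hG hmax N hNE
  have hclosed := closed_biSup Prod.snd Prod.fst F hessF hmaxF hindF (EF ⊔ D) hEssH le_sup_left
  have hcE : c ∈ EF := by
    have : c ∈ EF ⊔ D :=
      Submodule.mem_sup_right (Submodule.mem_span_singleton_self c)
    rwa [hclosed] at this
  exact hc (hEFE hcE)

lemma torsionless_imp_qcf {I : Type} (u : C →ₗ[𝓡] (I → DualAlg K C))
    (hu : Function.Injective u) :
    ∃ (J : Type) (F : C →ₗ[𝓡] (J →₀ DualAlg K C)), Function.Injective F := by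
  classical
  set f : I → (C →ₗ[𝓡] DualAlg K C) := fun i => (LinearMap.proj i) ∘ₗ u with hfdef
  have hsep : ∀ x : C, (∀ i, f i x = 0) → x = 0 := by
    intro x hx
    have h0 : u x = 0 := funext fun i => hx i
    exact hu (by rw [h0, map_zero])
  obtain ⟨𝒜, hG, hmax⟩ := exists_maximal_good (K := K) (C := C)
  have htop := maximal_good_top hG hmax
  set Em : {p : Submodule 𝓡 C × Submodule 𝓡 C // p ∈ 𝒜} → Submodule 𝓡 C :=
    fun p => (p : Submodule 𝓡 C × Submodule 𝓡 C).2 with hEmdef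
  have hind : iSupIndep Em := by
    intro p
    rw [disjoint_iff, ← le_bot_iff]
    have hle : (⨆ (q) (_ : q ≠ p), Em q) ≤
        sSup (Prod.snd '' (𝒜 \ {(p : Submodule 𝓡 C × Submodule 𝓡 C)})) := by
      refine iSup₂_le fun q hq => le_sSup ?_
      exact ⟨q, ⟨q.2, fun h => hq (Subtype.ext h)⟩, rfl⟩
    calc Em p ⊓ (⨆ (q) (_ : q ≠ p), Em q)
        ≤ (p : Submodule 𝓡 C × Submodule 𝓡 C).2 ⊓
          sSup (Prod.snd '' (𝒜 \ {(p : Submodule 𝓡 C × Submodule 𝓡 C)})) :=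
          inf_le_inf_left _ hle
      _ = ⊥ := hG.2 _ p.2
  have hsup : (⨆ p, Em p) = ⊤ := by
    rw [← htop]
    apply le_antisymm
    · exact iSup_le fun p => le_sSup ⟨p, p.2, rfl⟩
    · refine sSup_le ?_
      rintro y ⟨r, hr, rfl⟩
      exact le_iSup Em ⟨r, hr⟩
  have hinternal : DirectSum.IsInternal Em :=
    DirectSum.isInternal_submodule_of_iSupIndep_of_iSup_eq_top hind hsup
  have hGp : ∀ p : {p : Submodule 𝓡 C × Submodule 𝓡 C // p ∈ 𝒜},
      ∃ G : Finset I, ∀ x ∈ (p : Submodule 𝓡 C × Submodule 𝓡 C).1,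
        (∀ i ∈ G, f i x = 0) → x = 0 :=
    fun p => exists_finset_sep f hsep (p : Submodule 𝓡 C × Submodule 𝓡 C).1 (hG.1 _ p.2).1
  choose Gs hGs using hGp
  set g : ∀ p : {p : Submodule 𝓡 C × Submodule 𝓡 C // p ∈ 𝒜},
      ↥(Em p) →ₗ[𝓡] ({p : Submodule 𝓡 C × Submodule 𝓡 C // p ∈ 𝒜} × I →₀ DualAlg K C) :=
    fun p => ∑ i ∈ Gs p, (Finsupp.lsingle (p, i)) ∘ₗ ((f i) ∘ₗ (Em p).subtype) with hgdef
  set G := DirectSum.toModule 𝓡 _ ({p : Submodule 𝓡 C × Submodule 𝓡 C // p ∈ 𝒜} × I →₀ DualAlg K C) g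
    with hGdef
  have hGapply : ∀ (x : ⨁ p, ↥(Em p)) (p₀) (i : I), i ∈ Gs p₀ →
      (G x) (p₀, i) = f i ((x p₀ : C)) := by
    intro x p₀ i hi
    induction x using DirectSum.induction_on with
    | zero => simp
    | of p xp =>
      rw [hGdef, ← DirectSum.lof_eq_of 𝓡, DirectSum.toModule_lof]
      by_cases hpp : p = p₀
      · subst hpp
        rw [DirectSum.lof_eq_of, DirectSum.of_eq_same]
        rw [hgdef]
        simp only [LinearMap.sum_apply, LinearMap.coe_comp, Function.comp_apply,
          Finsupp.lsingle_apply, Submodule.coe_subtype, Finsupp.finset_sum_apply]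
        rw [Finset.sum_eq_single i
          (fun i' _ hne => by rw [Finsupp.single_apply, if_neg (by simp [hne])])
          (fun h => absurd hi h)]
        rw [Finsupp.single_apply, if_pos rfl]
      · have h1 : (g p) xp (p₀, i) = 0 := by
          rw [hgdef]
          simp only [LinearMap.sum_apply, LinearMap.coe_comp, Function.comp_apply,
            Finsupp.lsingle_apply, Submodule.coe_subtype, Finsupp.finset_sum_apply]
          refine Finset.sum_eq_zero fun i' _ => ?_
          rw [Finsupp.single_apply, if_neg (by simp [hpp])]
        rw [h1, DirectSum.lof_eq_of, DirectSum.of_eq_of_ne _ _ _ (Ne.symm hpp)]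
        simp
    | add a b ha hb =>
      rw [map_add, Finsupp.add_apply, ha, hb, DirectSum.add_apply, Submodule.coe_add, map_add]
  have hGker : ∀ x : ⨁ p, ↥(Em p), G x = 0 → x = 0 := by
    intro x hx
    refine DFinsupp.ext fun p₀ => ?_
    have hall : ∀ i ∈ Gs p₀, f i ((x p₀ : C)) = 0 := by
      intro i hi
      rw [← hGapply x p₀ i hi, hx]
      rfl
    set W := Em p₀ ⊓ ⨅ i ∈ Gs p₀, LinearMap.ker (f i) with hWdef
    have hxW : ((x p₀ : C)) ∈ W := ⟨(x p₀).2, (mem_biInf_ker f _).mpr hall⟩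
    have hWV : W ⊓ (p₀ : Submodule 𝓡 C × Submodule 𝓡 C).1 = ⊥ := by
      rw [Submodule.eq_bot_iff]
      rintro z ⟨⟨hz1, hz2⟩, hzV⟩
      exact hGs p₀ z hzV ((mem_biInf_ker f _).mp hz2)
    have hWbot : W = ⊥ := (hG.1 _ p₀.2).2.2.1.2 W inf_le_left hWV
    have hx0 := hxW
    rw [hWbot, Submodule.mem_bot] at hx0
    exact Subtype.ext hx0
  have hGinj : Function.Injective G := by
    intro a b hab
    have h0 : G (a - b) = 0 := by rw [map_sub, hab, sub_self]
    exact sub_eq_zero.mp (hGker _ h0)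
  set equiv := LinearEquiv.ofBijective (DirectSum.coeLinearMap Em) hinternal with hequivdef
  refine ⟨_, G ∘ₗ (equiv.symm : C ≃ₗ[𝓡] ⨁ p, ↥(Em p)).toLinearMap, ?_⟩
  have : ⇑(G ∘ₗ (equiv.symm : C ≃ₗ[𝓡] ⨁ p, ↥(Em p)).toLinearMap) = ⇑G ∘ ⇑equiv.symm := by
    rw [LinearMap.coe_comp]
    rfl
  rw [this]
  exact hGinj.comp equiv.symm.injective

end QcFTL

variable (K C : Type) [Field K] [AddCommGroup C] [Module K C] [Coalgebra K C]

/-- A coalgebra is right quasi-co-Frobenius if and only if it is right torsionless, i.e.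
there is a monomorphism of right `C*`-modules `C → (C*)^I` into a direct product of
copies of `C*`. -/
theorem rightQcF_iff_torsionless :
    RightQcF K C ↔
      ∃ (I : Type) (f : C →ₗ[(DualAlg K C)ᵐᵒᵖ] (I → DualAlg K C)), Function.Injective f := by

  constructor
  · rintro ⟨I, g, hg⟩
    let coeLM : (I →₀ DualAlg K C) →ₗ[(DualAlg K C)ᵐᵒᵖ] (I → DualAlg K C) :=
      { toFun := fun v => ⇑v
        map_add' := fun a b => by ext i; simp
        map_smul' := fun a v => by ext i; simp }
    refine ⟨I, coeLM ∘ₗ g, ?_⟩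
    intro a b hab
    apply hg
    exact DFunLike.coe_injective hab
  · rintro ⟨I, u, hu⟩
    obtain ⟨J, F, hF⟩ := QcFTL.torsionless_imp_qcf u hu
    exact ⟨J, F, hF⟩
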